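/- arXiv:1810.05501 — 2 statements merged into one kernel-verified Lean document; each statement's English description precedes it below -/
import Mathlib

section
/- For every fixed s ∈ ℝ²∖Γ₀, the map x ↦ Ĝ(x,s) is harmonic on ℝ²∖(Γ₀ ∪ {s}), and it satisfies the homogeneous Neumann boundary condition on the crack faces: at every point (x₁,0) of Γ₀ with x₁ < 0, the one-sided limits of ∂Ĝ/∂x₂(x₁,x₂,s) as x₂ → 0⁺ and as x₂ → 0⁻ both equal 0. -/
open Filter Topology

noncomputable section

/-- Lattice sites of `Λ = ℤ² − (1/2,1/2)` are indexed by `ℤ²`. -/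
abbrev Z2 := ℤ × ℤ

/-- The nearest-neighbour directions `ℛ = {e₁, e₂, −e₁, −e₂}`. -/
def Rall : Finset Z2 := {((1:ℤ),(0:ℤ)), (0,1), (-1,0), (0,-1)}

/-- The crack-adjusted stencil `ℛ(m)`: the lattice site indexed by `l ∈ ℤ²` sits at
`latpos l = l − (1/2,1/2)`, so it lies on `Γ₊` iff `l.1 ≤ 0 ∧ l.2 = 1` (where `e₂` points
away from the crack and `−e₂` is erased), and on `Γ₋` iff `l.1 ≤ 0 ∧ l.2 = 0` (where `e₂`
is erased). -/
def Rm (m : Z2) : Finset Z2 :=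
  if m.1 ≤ 0 ∧ m.2 = 1 then Rall.erase (0,-1)
  else if m.1 ≤ 0 ∧ m.2 = 0 then Rall.erase (0,1)
  else Rall

/-- Discrete gradient component `(Du(m))_ρ`. -/
def Dg (u : Z2 → ℝ) (m ρ : Z2) : ℝ :=
  if ρ ∈ Rm m then u (m + ρ) - u m else 0

/-- `|Du(m)|²`. -/
def gradSq (u : Z2 → ℝ) (m : Z2) : ℝ := ∑ ρ ∈ Rall, (Dg u m ρ) ^ 2

/-- The index of the distinguished lattice site `x̂ = (1/2,1/2)`. -/
def xhat : Z2 := (1, 1)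

/-- Membership in the discrete energy space `ℋ¹`: `Du ∈ ℓ²` and `u(x̂) = 0`. -/
def memH1 (u : Z2 → ℝ) : Prop := Summable (gradSq u) ∧ u xhat = 0

/-- `‖u‖_{ℋ¹} = ‖Du‖_{ℓ²}`. -/
def H1norm (u : Z2 → ℝ) : ℝ := Real.sqrt (∑' m, gradSq u m)

/-- Euclidean norm on `ℝ²`. -/
def nrm (x : ℝ × ℝ) : ℝ := Real.sqrt (x.1 ^ 2 + x.2 ^ 2)

/-- The crack set `Γ₀ = {(x₁,0) : x₁ ≤ 0}`. -/
def Gamma0 : Set (ℝ × ℝ) := {x | x.1 ≤ 0 ∧ x.2 = 0}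

/-- Position in `ℝ²` of the lattice site indexed by `l ∈ ℤ²`. -/
def latpos (l : Z2) : ℝ × ℝ := ((l.1 : ℝ) - 1/2, (l.2 : ℝ) - 1/2)

/-- The complex square root map `ω`, in polar coordinates with `θ = arg ∈ (−π,π]`:
`ω(x) = (√r cos(θ/2), √r sin(θ/2))`. -/
def omegaMap (x : ℝ × ℝ) : ℝ × ℝ :=
  (Real.sqrt (nrm x) * Real.cos (Complex.arg ((x.1 : ℂ) + (x.2 : ℂ) * Complex.I) / 2),
   Real.sqrt (nrm x) * Real.sin (Complex.arg ((x.1 : ℂ) + (x.2 : ℂ) * Complex.I) / 2))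

/-- The reflection `ω*` of `ω` through the vertical axis. -/
def omegaStar (x : ℝ × ℝ) : ℝ × ℝ := (-(omegaMap x).1, (omegaMap x).2)

/-- The continuum Green's function for the crack geometry (with `C_Λ = 2`):
`Ĝ(x,s) = −(1/(2π·2)) [log|ω(x) − ω(s)| + log|ω(x) − ω*(s)|]`. -/
def Ghat (x s : ℝ × ℝ) : ℝ :=
  -(1 / (2 * Real.pi * 2)) *
    (Real.log (nrm (omegaMap x - omegaMap s)) + Real.log (nrm (omegaMap x - omegaStar s)))

/-- First partial derivative `∂f/∂x₁`. -/
def pd1 (f : ℝ × ℝ → ℝ) (x : ℝ × ℝ) : ℝ := deriv (fun t => f (t, x.2)) x.1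

/-- Second partial derivative `∂f/∂x₂`. -/
def pd2 (f : ℝ × ℝ → ℝ) (x : ℝ × ℝ) : ℝ := deriv (fun t => f (x.1, t)) x.2

namespace GhatAux
open Complex

noncomputable def toC (p : ℝ × ℝ) : ℂ := (p.1 : ℂ) + (p.2 : ℂ) * Complex.I

@[simp] lemma toC_re (p : ℝ × ℝ) : (toC p).re = p.1 := by simp [toC]
@[simp] lemma toC_im (p : ℝ × ℝ) : (toC p).im = p.2 := by simp [toC]

lemma toC_inj {p q : ℝ × ℝ} (h : toC p = toC q) : p = q := by
  have h1 := congrArg Complex.re h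
  have h2 := congrArg Complex.im h
  simp at h1 h2
  exact Prod.ext h1 h2

lemma toC_sub (p q : ℝ × ℝ) : toC (p - q) = toC p - toC q := by
  simp [toC]; ring

lemma nrm_eq (p : ℝ × ℝ) : nrm p = ‖toC p‖ := by
  rw [nrm, Complex.norm_def, Complex.normSq_apply]
  simp only [toC_re, toC_im]
  ring_nf

noncomputable def Q (z : ℂ) : ℂ := z ^ (1/2 : ℂ)

lemma sqrt_eq_exp_half_log {r : ℝ} (hr : 0 < r) :
    Real.sqrt r = Real.exp (Real.log r / 2) := by
  rw [← Real.log_sqrt hr.le, Real.exp_log (Real.sqrt_pos.mpr hr)]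

lemma omega_eq (x : ℝ × ℝ) : toC (omegaMap x) = Q (toC x) := by
  by_cases hx : toC x = 0
  · have h1 : x.1 = 0 := by rw [← toC_re x, hx]; simp
    have h2 : x.2 = 0 := by rw [← toC_im x, hx]; simp
    rw [hx]
    simp [Q, Complex.zero_cpow (by norm_num : (1/2 : ℂ) ≠ 0), toC, omegaMap, nrm, h1, h2]
  · have habs : 0 < ‖toC x‖ := by
      simpa [norm_pos_iff] using hx
    have harg : Complex.arg ((x.1 : ℂ) + (x.2 : ℂ) * Complex.I) = (toC x).arg := rfl
    rw [Q, Complex.cpow_def_of_ne_zero hx]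
    apply Complex.ext
    · rw [Complex.exp_re]
      simp only [toC_re, omegaMap, Complex.mul_re, Complex.mul_im, Complex.log_re,
        Complex.log_im, Complex.one_re, Complex.one_im]
      rw [nrm_eq, harg, sqrt_eq_exp_half_log habs]
      norm_num [mul_one_div]
    · rw [Complex.exp_im]
      simp only [toC_im, omegaMap, Complex.mul_re, Complex.mul_im, Complex.log_re,
        Complex.log_im]
      rw [nrm_eq, harg, sqrt_eq_exp_half_log habs]
      norm_num [mul_one_div]

end GhatAux
namespace GhatAux
open Complex

lemma Qre_pos {z : ℂ} (hz : z ∈ Complex.slitPlane) : 0 < (Q z).re := by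
  have hz0 : z ≠ 0 := Complex.slitPlane_ne_zero hz
  have habs : 0 < ‖z‖ := norm_pos_iff.mpr hz0
  rw [Q, Complex.cpow_def_of_ne_zero hz0, Complex.exp_re]
  have harg : z.arg ≠ Real.pi ∧ z ≠ 0 := Complex.mem_slitPlane_iff_arg.mp hz
  have h1 : z.arg < Real.pi := lt_of_le_of_ne (Complex.arg_le_pi z) harg.1
  have h2 : -Real.pi < z.arg := Complex.neg_pi_lt_arg z
  have hpi : 0 < Real.pi := Real.pi_pos
  have hcos : 0 < Real.cos ((Complex.log z * (1/2)).im) := by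
    have : (Complex.log z * (1/2)).im = z.arg / 2 := by
      simp [Complex.mul_im, Complex.log_im, Complex.log_re]
      norm_num [mul_one_div]
    rw [this]
    apply Real.cos_pos_of_mem_Ioo
    constructor <;> [linarith; linarith]
  positivity

lemma Q_ne_zero {z : ℂ} (hz : z ∈ Complex.slitPlane) : Q z ≠ 0 := by
  intro h
  have := Qre_pos hz
  rw [h] at this; simp at this

lemma Q_sq {z : ℂ} (hz : z ≠ 0) : Q z * Q z = z := by
  rw [Q, ← Complex.cpow_add _ _ hz]
  norm_num

lemma Q_inj {z w : ℂ} (hz : z ∈ Complex.slitPlane) (hw : w ∈ Complex.slitPlane)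
    (h : z ≠ w) : Q z ≠ Q w := by
  intro he
  apply h
  rw [← Q_sq (Complex.slitPlane_ne_zero hz), ← Q_sq (Complex.slitPlane_ne_zero hw), he]

lemma Q_add_conj_ne {z w : ℂ} (hz : z ∈ Complex.slitPlane) (hw : w ∈ Complex.slitPlane) :
    Q z + (starRingEnd ℂ) (Q w) ≠ 0 := by
  intro he
  have h1 : 0 < (Q z).re := Qre_pos hz
  have h2 : 0 < (Q w).re := Qre_pos hw
  have := congrArg Complex.re he
  simp [Complex.add_re, Complex.conj_re] at this
  linarith

end GhatAux
namespace GhatAux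
open Complex Filter Topology

lemma cont_slice1 (y2 : ℝ) : Continuous (fun t : ℝ => toC (t, y2)) := by
  simp only [toC]
  fun_prop

lemma cont_slice2 (y1 : ℝ) : Continuous (fun t : ℝ => toC (y1, t)) := by
  simp only [toC]
  fun_prop

lemma pd1_of_holo {U : Set ℂ} (hU : IsOpen U) {H : ℂ → ℂ} (hH : DifferentiableOn ℂ H U)
    {g : ℝ × ℝ → ℝ} (hg : ∀ y : ℝ × ℝ, toC y ∈ U → g y = (H (toC y)).re)
    {x : ℝ × ℝ} (hx : toC x ∈ U) : pd1 g x = (deriv H (toC x)).re := by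
  have hD : DifferentiableAt ℂ H (toC x) := hH.differentiableAt (hU.mem_nhds hx)
  have h1 : HasDerivAt (fun ζ : ℂ => H (ζ + (x.2 : ℂ) * I)) (deriv H (toC x)) (x.1 : ℂ) := by
    have hb : HasDerivAt (fun ζ : ℂ => ζ + (x.2 : ℂ) * I) 1 (x.1 : ℂ) :=
      (hasDerivAt_id _).add_const _
    have hc : HasDerivAt H (deriv H (toC x)) ((x.1 : ℂ) + (x.2 : ℂ) * I) := by
      have : toC x = (x.1 : ℂ) + (x.2 : ℂ) * I := rfl
      rw [← this]; exact hD.hasDerivAt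
    simpa [Function.comp_def] using hc.comp (x.1 : ℂ) hb
  have h2 : HasDerivAt (fun t : ℝ => (H ((t : ℂ) + (x.2 : ℂ) * I)).re)
      ((deriv H (toC x)).re) x.1 := h1.real_of_complex
  have hE : (fun t : ℝ => g (t, x.2)) =ᶠ[𝓝 x.1] fun t : ℝ => (H ((t : ℂ) + (x.2 : ℂ) * I)).re := by
    have hopen : IsOpen {t : ℝ | toC (t, x.2) ∈ U} := hU.preimage (cont_slice1 x.2)
    have hmem : x.1 ∈ {t : ℝ | toC (t, x.2) ∈ U} := hx
    filter_upwards [hopen.mem_nhds hmem] with t ht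
    exact hg (t, x.2) ht
  rw [pd1, hE.deriv_eq, h2.deriv]

lemma pd2_of_holo {U : Set ℂ} (hU : IsOpen U) {H : ℂ → ℂ} (hH : DifferentiableOn ℂ H U)
    {g : ℝ × ℝ → ℝ} (hg : ∀ y : ℝ × ℝ, toC y ∈ U → g y = (H (toC y)).re)
    {x : ℝ × ℝ} (hx : toC x ∈ U) : pd2 g x = (deriv H (toC x) * I).re := by
  have hD : DifferentiableAt ℂ H (toC x) := hH.differentiableAt (hU.mem_nhds hx)
  have h1 : HasDerivAt (fun ζ : ℂ => H ((x.1 : ℂ) + ζ * I)) (deriv H (toC x) * I) (x.2 : ℂ) := by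
    have hb : HasDerivAt (fun ζ : ℂ => (x.1 : ℂ) + ζ * I) I (x.2 : ℂ) := by
      simpa using ((hasDerivAt_id ((x.2 : ℂ))).mul_const I).const_add ((x.1 : ℂ))
    have hc : HasDerivAt H (deriv H (toC x)) ((x.1 : ℂ) + (x.2 : ℂ) * I) := by
      have : toC x = (x.1 : ℂ) + (x.2 : ℂ) * I := rfl
      rw [← this]; exact hD.hasDerivAt
    simpa [Function.comp_def] using hc.comp (x.2 : ℂ) hb
  have h2 : HasDerivAt (fun t : ℝ => (H ((x.1 : ℂ) + (t : ℂ) * I)).re)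
      ((deriv H (toC x) * I).re) x.2 := h1.real_of_complex
  have hE : (fun t : ℝ => g (x.1, t)) =ᶠ[𝓝 x.2] fun t : ℝ => (H ((x.1 : ℂ) + (t : ℂ) * I)).re := by
    have hopen : IsOpen {t : ℝ | toC (x.1, t) ∈ U} := hU.preimage (cont_slice2 x.1)
    have hmem : x.2 ∈ {t : ℝ | toC (x.1, t) ∈ U} := hx
    filter_upwards [hopen.mem_nhds hmem] with t ht
    exact hg (x.1, t) ht
  rw [pd2, hE.deriv_eq, h2.deriv]

lemma pd1_congr {U : Set ℂ} (hU : IsOpen U) {f₁ f₂ : ℝ × ℝ → ℝ}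
    (h : ∀ y : ℝ × ℝ, toC y ∈ U → f₁ y = f₂ y) {x : ℝ × ℝ} (hx : toC x ∈ U) :
    pd1 f₁ x = pd1 f₂ x := by
  have hopen : IsOpen {t : ℝ | toC (t, x.2) ∈ U} := hU.preimage (cont_slice1 x.2)
  have hE : (fun t : ℝ => f₁ (t, x.2)) =ᶠ[𝓝 x.1] fun t : ℝ => f₂ (t, x.2) := by
    filter_upwards [hopen.mem_nhds hx] with t ht
    exact h (t, x.2) ht
  exact hE.deriv_eq

lemma pd2_congr {U : Set ℂ} (hU : IsOpen U) {f₁ f₂ : ℝ × ℝ → ℝ}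
    (h : ∀ y : ℝ × ℝ, toC y ∈ U → f₁ y = f₂ y) {x : ℝ × ℝ} (hx : toC x ∈ U) :
    pd2 f₁ x = pd2 f₂ x := by
  have hopen : IsOpen {t : ℝ | toC (x.1, t) ∈ U} := hU.preimage (cont_slice2 x.1)
  have hE : (fun t : ℝ => f₁ (x.1, t)) =ᶠ[𝓝 x.2] fun t : ℝ => f₂ (x.1, t) := by
    filter_upwards [hopen.mem_nhds hx] with t ht
    exact h (x.1, t) ht
  exact hE.deriv_eq

lemma harmonic_of_holo {U : Set ℂ} (hU : IsOpen U) {H : ℂ → ℂ} (hH : DifferentiableOn ℂ H U)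
    {g : ℝ × ℝ → ℝ} (hg : ∀ y : ℝ × ℝ, toC y ∈ U → g y = (H (toC y)).re)
    {x : ℝ × ℝ} (hx : toC x ∈ U) : pd1 (pd1 g) x + pd2 (pd2 g) x = 0 := by
  have hA : AnalyticOnNhd ℂ H U := hH.analyticOnNhd hU
  have hH' : DifferentiableOn ℂ (deriv H) U := hA.deriv.differentiableOn
  set H2 : ℂ → ℂ := fun ζ => deriv H ζ * I with hH2def
  have hH2 : DifferentiableOn ℂ H2 U := hH'.mul_const I
  -- first term
  have e1 : pd1 (pd1 g) x = pd1 (fun y => (deriv H (toC y)).re) x :=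
    pd1_congr hU (fun y hy => pd1_of_holo hU hH hg hy) hx
  have e2 : pd1 (fun y => (deriv H (toC y)).re) x = (deriv (deriv H) (toC x)).re :=
    pd1_of_holo hU hH' (fun y _ => rfl) hx
  -- second term
  have e3 : pd2 (pd2 g) x = pd2 (fun y => (H2 (toC y)).re) x :=
    pd2_congr hU (fun y hy => pd2_of_holo hU hH hg hy) hx
  have e4 : pd2 (fun y => (H2 (toC y)).re) x = (deriv H2 (toC x) * I).re :=
    pd2_of_holo hU hH2 (fun y _ => rfl) hx
  have e5 : deriv H2 (toC x) = deriv (deriv H) (toC x) * I := by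
    rw [hH2def]
    exact deriv_mul_const (hH'.differentiableAt (hU.mem_nhds hx)) I
  rw [e1, e2, e3, e4, e5]
  have : deriv (deriv H) (toC x) * I * I = -(deriv (deriv H) (toC x)) := by
    rw [mul_assoc, Complex.I_mul_I, mul_neg_one]
  rw [this]
  simp

end GhatAux
namespace GhatAux
open Complex Filter Topology

lemma omegaStar_eq (s : ℝ × ℝ) : toC (omegaStar s) = -((starRingEnd ℂ) (Q (toC s))) := by
  rw [← omega_eq]
  apply Complex.ext <;> simp [omegaStar]

lemma ghat_formula (s x : ℝ × ℝ) :
    Ghat x s = -(1 / (2 * Real.pi * 2)) *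
      (Real.log ‖Q (toC x) - Q (toC s)‖ +
       Real.log ‖Q (toC x) + (starRingEnd ℂ) (Q (toC s))‖) := by
  rw [Ghat, nrm_eq, nrm_eq, toC_sub, toC_sub, omega_eq, omega_eq, omegaStar_eq]
  ring_nf

lemma contOn_Q : ContinuousOn Q Complex.slitPlane := fun z hz =>
  (continuousAt_cpow_const hz).continuousWithinAt

/-- Local holomorphic representation of the Green's function. -/
lemma local_rep (w : ℂ) {z₀ : ℂ} (hz₀ : z₀ ∈ Complex.slitPlane)
    (h1 : Q z₀ - w ≠ 0) (h2 : Q z₀ + (starRingEnd ℂ) w ≠ 0) :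
    ∃ (U : Set ℂ) (H : ℂ → ℂ), IsOpen U ∧ z₀ ∈ U ∧ DifferentiableOn ℂ H U ∧
      (∀ ζ ∈ U, (H ζ).re = -(1 / (2 * Real.pi * 2)) *
        (Real.log ‖Q ζ - w‖ +
         Real.log ‖Q ζ + (starRingEnd ℂ) w‖)) ∧
      deriv H z₀ = ((-(1 / (2 * Real.pi * 2)) : ℝ) : ℂ) *
        (((Q z₀ - w)⁻¹ + (Q z₀ + (starRingEnd ℂ) w)⁻¹) * (2 * Q z₀)⁻¹) := by
  set r : ℝ := -(1 / (2 * Real.pi * 2)) with hr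
  set u : ℂ := Q z₀ - w with hu
  set v : ℂ := Q z₀ + (starRingEnd ℂ) w with hv
  set c₁ : ℂ := (‖u‖ : ℂ) / u with hc₁
  set c₂ : ℂ := (‖v‖ : ℂ) / v with hc₂
  have hc₁ne : c₁ ≠ 0 := by
    rw [hc₁]
    apply div_ne_zero _ h1
    simpa using h1
  have hc₂ne : c₂ ≠ 0 := by
    rw [hc₂]
    apply div_ne_zero _ h2
    simpa using h2
  have habs₁ : ‖c₁‖ = 1 := by
    rw [hc₁, norm_div, Complex.norm_real, norm_norm]
    exact div_self (by simpa using h1)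
  have habs₂ : ‖c₂‖ = 1 := by
    rw [hc₂, norm_div, Complex.norm_real, norm_norm]
    exact div_self (by simpa using h2)
  set g₁ : ℂ → ℂ := fun ζ => c₁ * (Q ζ - w) with hg₁
  set g₂ : ℂ → ℂ := fun ζ => c₂ * (Q ζ + (starRingEnd ℂ) w) with hg₂
  have hcont₁ : ContinuousOn g₁ Complex.slitPlane :=
    continuousOn_const.mul (contOn_Q.sub continuousOn_const)
  have hcont₂ : ContinuousOn g₂ Complex.slitPlane :=
    continuousOn_const.mul (contOn_Q.add continuousOn_const)
  set U : Set ℂ := (Complex.slitPlane ∩ g₁ ⁻¹' Complex.slitPlane) ∩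
      (Complex.slitPlane ∩ g₂ ⁻¹' Complex.slitPlane) with hU
  have hUopen : IsOpen U :=
    ((hcont₁.isOpen_inter_preimage Complex.isOpen_slitPlane Complex.isOpen_slitPlane).inter
      (hcont₂.isOpen_inter_preimage Complex.isOpen_slitPlane Complex.isOpen_slitPlane))
  have hmem₁ : g₁ z₀ ∈ Complex.slitPlane := by
    have : g₁ z₀ = (‖u‖ : ℂ) := by
      rw [hg₁]; simp only [← hu]; rw [hc₁, div_mul_cancel₀ _ h1]
    rw [this]
    exact Complex.ofReal_mem_slitPlane.mpr (by simpa using h1)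
  have hmem₂ : g₂ z₀ ∈ Complex.slitPlane := by
    have : g₂ z₀ = (‖v‖ : ℂ) := by
      rw [hg₂]; simp only [← hv]; rw [hc₂, div_mul_cancel₀ _ h2]
    rw [this]
    exact Complex.ofReal_mem_slitPlane.mpr (by simpa using h2)
  have hz₀U : z₀ ∈ U := ⟨⟨hz₀, hmem₁⟩, ⟨hz₀, hmem₂⟩⟩
  set H : ℂ → ℂ := fun ζ => (r : ℂ) * (Complex.log (g₁ ζ) + Complex.log (g₂ ζ)) with hH
  refine ⟨U, H, hUopen, hz₀U, ?_, ?_, ?_⟩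
  · -- differentiability
    intro ζ hζ
    have hQd : DifferentiableAt ℂ Q ζ :=
      (HasStrictDerivAt.hasDerivAt (Complex.hasStrictDerivAt_cpow_const hζ.1.1)).differentiableAt
    have hd₁ : DifferentiableAt ℂ g₁ ζ := ((hQd.sub_const w).const_mul c₁)
    have hd₂ : DifferentiableAt ℂ g₂ ζ := ((hQd.add_const _).const_mul c₂)
    exact (((hd₁.clog hζ.1.2).add (hd₂.clog hζ.2.2)).const_mul _).differentiableWithinAt
  · -- real part
    intro ζ hζ
    have e₁ : (Complex.log (g₁ ζ)).re = Real.log ‖Q ζ - w‖ := by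
      rw [Complex.log_re, hg₁]
      simp only [norm_mul, habs₁, one_mul]
    have e₂ : (Complex.log (g₂ ζ)).re = Real.log ‖Q ζ + (starRingEnd ℂ) w‖ := by
      rw [Complex.log_re, hg₂]
      simp only [norm_mul, habs₂, one_mul]
    show ((r : ℂ) * (Complex.log (g₁ ζ) + Complex.log (g₂ ζ))).re = _
    rw [Complex.re_ofReal_mul, Complex.add_re, e₁, e₂, hr]
  · -- derivative at z₀
    have hQ' : HasDerivAt Q ((1/2 : ℂ) * z₀ ^ ((1/2 : ℂ) - 1)) z₀ :=
      HasStrictDerivAt.hasDerivAt (Complex.hasStrictDerivAt_cpow_const hz₀)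
    set q' : ℂ := (1/2 : ℂ) * z₀ ^ ((1/2 : ℂ) - 1) with hq'
    have hd₁ : HasDerivAt g₁ (c₁ * q') z₀ := by
      rw [hg₁]
      exact ((hQ'.sub_const w).const_mul c₁)
    have hd₂ : HasDerivAt g₂ (c₂ * q') z₀ := by
      rw [hg₂]
      exact ((hQ'.add_const _).const_mul c₂)
    have hlog₁ : HasDerivAt (fun ζ => Complex.log (g₁ ζ)) ((g₁ z₀)⁻¹ * (c₁ * q')) z₀ :=
      (Complex.hasDerivAt_log hmem₁).comp z₀ hd₁
    have hlog₂ : HasDerivAt (fun ζ => Complex.log (g₂ ζ)) ((g₂ z₀)⁻¹ * (c₂ * q')) z₀ :=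
      (Complex.hasDerivAt_log hmem₂).comp z₀ hd₂
    have hHd : HasDerivAt H ((r : ℂ) * ((g₁ z₀)⁻¹ * (c₁ * q') + (g₂ z₀)⁻¹ * (c₂ * q'))) z₀ := by
      rw [hH]
      exact (hlog₁.add hlog₂).const_mul _
    rw [hHd.deriv]
    have hg₁z : g₁ z₀ = c₁ * u := by rw [hg₁]
    have hg₂z : g₂ z₀ = c₂ * v := by rw [hg₂]
    have hq'eq : q' = (2 * Q z₀)⁻¹ := by
      rw [hq']
      have : (1/2 : ℂ) - 1 = -(1/2 : ℂ) := by norm_num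
      rw [this, Complex.cpow_neg, mul_inv]
      norm_num [Q]
    rw [hg₁z, hg₂z, hq'eq]
    have hsimp : ∀ (c a : ℂ), c ≠ 0 → a ≠ 0 →
        (c * a)⁻¹ * (c * (2 * Q z₀)⁻¹) = a⁻¹ * (2 * Q z₀)⁻¹ := by
      intro c a hc ha
      calc (c * a)⁻¹ * (c * (2 * Q z₀)⁻¹) = (c⁻¹ * c) * (a⁻¹ * (2 * Q z₀)⁻¹) := by
              rw [mul_inv]; ring
        _ = a⁻¹ * (2 * Q z₀)⁻¹ := by rw [inv_mul_cancel₀ hc, one_mul]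
    rw [hsimp c₁ u hc₁ne h1, hsimp c₂ v hc₂ne h2]
    ring

end GhatAux
namespace GhatAux
open Complex Filter Topology

lemma conj_of_re_zero {L : ℂ} (hL : L.re = 0) : (starRingEnd ℂ) L = -L := by
  apply Complex.ext <;> simp [hL]

lemma Z_lemma (r : ℝ) (u L : ℂ) (hL : L.re = 0) :
    ((r : ℂ) * ((u⁻¹ + (-((starRingEnd ℂ) u))⁻¹) * (2 * L)⁻¹) * I).re = 0 := by
  have hLeq : L = (L.im : ℂ) * I := by
    apply Complex.ext <;> simp [hL]
  have h1 : u⁻¹ + (-((starRingEnd ℂ) u))⁻¹ = ((2 * (u⁻¹).im : ℝ) : ℂ) * I := by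
    rw [inv_neg, ← map_inv₀ (starRingEnd ℂ) u, ← sub_eq_add_neg, Complex.sub_conj]
  rw [h1, hLeq]
  have h2 : (2 * ((L.im : ℂ) * I))⁻¹ = ((2 * L.im : ℝ) : ℂ)⁻¹ * I⁻¹ := by
    rw [← mul_inv]; congr 1; push_cast; ring
  rw [h2, Complex.inv_I]
  have : ((r : ℂ) * ((((2 * (u⁻¹).im : ℝ) : ℂ) * I) * (((2 * L.im : ℝ) : ℂ)⁻¹ * -I)) * I)
      = ((r * (2 * (u⁻¹).im) * (2 * L.im)⁻¹ : ℝ) : ℂ) * I := by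
    push_cast
    ring_nf
    rw [show (I : ℂ)^3 = -I by rw [pow_succ, Complex.I_sq]; ring]
    ring
  rw [this]
  simp

end GhatAux
namespace GhatAux
open Complex Filter Topology

lemma tendsto_zc {x₁ : ℝ} (S : Set ℝ) :
    Tendsto (fun t : ℝ => (x₁ : ℂ) + (t : ℂ) * I) (𝓝[S] (0:ℝ)) (𝓝 ((x₁ : ℂ))) := by
  have hcont : Continuous (fun t : ℝ => (x₁ : ℂ) + (t : ℂ) * I) := by fun_prop
  have := (hcont.tendsto 0).mono_left (nhdsWithin_le_nhds (s := S))
  simpa using this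

lemma tendsto_Q_upper {x₁ : ℝ} (hx : x₁ < 0) :
    Tendsto (fun t : ℝ => Q ((x₁ : ℂ) + (t : ℂ) * I)) (𝓝[>] (0:ℝ))
      (𝓝 (Complex.exp ((↑(Real.log (-x₁)) + ↑Real.pi * I) * (1/2)))) := by
  have hz : Tendsto (fun t : ℝ => (x₁ : ℂ) + (t : ℂ) * I) (𝓝[>] (0:ℝ))
      (𝓝[{z : ℂ | 0 ≤ z.im}] ((x₁ : ℂ))) := by
    rw [tendsto_nhdsWithin_iff]
    refine ⟨tendsto_zc _, ?_⟩
    filter_upwards [self_mem_nhdsWithin] with t ht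
    simp only [Set.mem_setOf_eq, Complex.add_im, Complex.ofReal_im, Complex.mul_im,
      Complex.ofReal_re, Complex.I_im, Complex.I_re]
    simp
    exact (le_of_lt ht)
  have hlog := Complex.tendsto_log_nhdsWithin_im_nonneg_of_re_neg_of_im_zero
    (z := (x₁ : ℂ)) (by simpa using hx) (by simp)
  have habs : ‖((x₁ : ℂ))‖ = -x₁ := by
    rw [Complex.norm_real, Real.norm_eq_abs, abs_of_neg hx]
  rw [habs] at hlog
  have h2 : Tendsto (fun t : ℝ => Complex.log ((x₁ : ℂ) + (t : ℂ) * I)) (𝓝[>] (0:ℝ))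
      (𝓝 (↑(Real.log (-x₁)) + ↑Real.pi * I)) := hlog.comp hz
  have h3 : Tendsto (fun t : ℝ => Complex.exp (Complex.log ((x₁ : ℂ) + (t : ℂ) * I) * (1/2)))
      (𝓝[>] (0:ℝ)) (𝓝 (Complex.exp ((↑(Real.log (-x₁)) + ↑Real.pi * I) * (1/2)))) :=
    (Complex.continuous_exp.tendsto _).comp (h2.mul_const _)
  refine Tendsto.congr' ?_ h3
  filter_upwards [self_mem_nhdsWithin] with t ht
  have hne : (x₁ : ℂ) + (t : ℂ) * I ≠ 0 := by
    intro h
    have := congrArg Complex.im h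
    simp at this
    rw [this] at ht
    simp at ht
  rw [Q, Complex.cpow_def_of_ne_zero hne]

lemma tendsto_Q_lower {x₁ : ℝ} (hx : x₁ < 0) :
    Tendsto (fun t : ℝ => Q ((x₁ : ℂ) + (t : ℂ) * I)) (𝓝[<] (0:ℝ))
      (𝓝 (Complex.exp ((↑(Real.log (-x₁)) - ↑Real.pi * I) * (1/2)))) := by
  have hz : Tendsto (fun t : ℝ => (x₁ : ℂ) + (t : ℂ) * I) (𝓝[<] (0:ℝ))
      (𝓝[{z : ℂ | z.im < 0}] ((x₁ : ℂ))) := by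
    rw [tendsto_nhdsWithin_iff]
    refine ⟨tendsto_zc _, ?_⟩
    filter_upwards [self_mem_nhdsWithin] with t ht
    simp only [Set.mem_setOf_eq, Complex.add_im, Complex.ofReal_im, Complex.mul_im,
      Complex.ofReal_re, Complex.I_im, Complex.I_re]
    simpa using ht
  have hlog := Complex.tendsto_log_nhdsWithin_im_neg_of_re_neg_of_im_zero
    (z := (x₁ : ℂ)) (by simpa using hx) (by simp)
  have habs : ‖((x₁ : ℂ))‖ = -x₁ := by
    rw [Complex.norm_real, Real.norm_eq_abs, abs_of_neg hx]
  rw [habs] at hlog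
  have h2 : Tendsto (fun t : ℝ => Complex.log ((x₁ : ℂ) + (t : ℂ) * I)) (𝓝[<] (0:ℝ))
      (𝓝 (↑(Real.log (-x₁)) - ↑Real.pi * I)) := hlog.comp hz
  have h3 : Tendsto (fun t : ℝ => Complex.exp (Complex.log ((x₁ : ℂ) + (t : ℂ) * I) * (1/2)))
      (𝓝[<] (0:ℝ)) (𝓝 (Complex.exp ((↑(Real.log (-x₁)) - ↑Real.pi * I) * (1/2)))) :=
    (Complex.continuous_exp.tendsto _).comp (h2.mul_const _)
  refine Tendsto.congr' ?_ h3
  filter_upwards [self_mem_nhdsWithin] with t ht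
  have hne : (x₁ : ℂ) + (t : ℂ) * I ≠ 0 := by
    intro h
    have := congrArg Complex.im h
    simp at this
    rw [this] at ht
    simp at ht
  rw [Q, Complex.cpow_def_of_ne_zero hne]

lemma exp_re_zero_upper {x₁ : ℝ} :
    (Complex.exp ((↑(Real.log (-x₁)) + ↑Real.pi * I) * (1/2))).re = 0 := by
  rw [Complex.exp_re]
  have him : (((↑(Real.log (-x₁)) + ↑Real.pi * I) * (1/2) : ℂ)).im = Real.pi / 2 := by
    simp [Complex.mul_im, Complex.add_im, Complex.mul_re]
    ring
  rw [him, Real.cos_pi_div_two, mul_zero]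

lemma exp_re_zero_lower {x₁ : ℝ} :
    (Complex.exp ((↑(Real.log (-x₁)) - ↑Real.pi * I) * (1/2))).re = 0 := by
  rw [Complex.exp_re]
  have him : (((↑(Real.log (-x₁)) - ↑Real.pi * I) * (1/2) : ℂ)).im = -(Real.pi / 2) := by
    simp [Complex.mul_im, Complex.sub_im, Complex.mul_re]
    ring
  rw [him, Real.cos_neg, Real.cos_pi_div_two, mul_zero]

lemma tendsto_Phi (r : ℝ) {x₁ : ℝ} {F : Filter ℝ} {w Lv : ℂ} (hw : 0 < w.re)
    (hLre : Lv.re = 0) (hLne : Lv ≠ 0)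
    (hQt : Tendsto (fun t : ℝ => Q ((x₁ : ℂ) + (t : ℂ) * I)) F (𝓝 Lv)) :
    Tendsto (fun t : ℝ => ((r : ℂ) *
        (((Q ((x₁ : ℂ) + (t : ℂ) * I) - w)⁻¹ +
          (Q ((x₁ : ℂ) + (t : ℂ) * I) + (starRingEnd ℂ) w)⁻¹) *
          (2 * Q ((x₁ : ℂ) + (t : ℂ) * I))⁻¹) * I).re) F (𝓝 0) := by
  have hu : Lv - w ≠ 0 := by
    intro h
    have := congrArg Complex.re h
    simp [hLre] at this
    linarith
  have hv : Lv + (starRingEnd ℂ) w ≠ 0 := by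
    intro h
    have := congrArg Complex.re h
    simp [hLre, Complex.conj_re] at this
    linarith
  have h2L : (2 : ℂ) * Lv ≠ 0 := by
    apply mul_ne_zero _ hLne
    norm_num
  have T : Tendsto (fun t : ℝ => ((r : ℂ) *
      (((Q ((x₁ : ℂ) + (t : ℂ) * I) - w)⁻¹ +
        (Q ((x₁ : ℂ) + (t : ℂ) * I) + (starRingEnd ℂ) w)⁻¹) *
        (2 * Q ((x₁ : ℂ) + (t : ℂ) * I))⁻¹) * I)) F
      (𝓝 ((r : ℂ) * (((Lv - w)⁻¹ + (Lv + (starRingEnd ℂ) w)⁻¹) * (2 * Lv)⁻¹) * I)) := by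
    exact ((tendsto_const_nhds.mul
      ((((hQt.sub tendsto_const_nhds).inv₀ hu).add
        ((hQt.add tendsto_const_nhds).inv₀ hv)).mul
        ((tendsto_const_nhds.mul hQt).inv₀ h2L))).mul_const I)
  have hV : ((r : ℂ) * (((Lv - w)⁻¹ + (Lv + (starRingEnd ℂ) w)⁻¹) * (2 * Lv)⁻¹) * I).re = 0 := by
    have hrw : Lv + (starRingEnd ℂ) w = -((starRingEnd ℂ) (Lv - w)) := by
      rw [map_sub, conj_of_re_zero hLre]
      ring
    rw [hrw]
    exact Z_lemma r (Lv - w) Lv hLre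
  have T2 := (Complex.continuous_re.tendsto _).comp T
  rw [hV] at T2
  simpa only [Function.comp_def] using T2

end GhatAux
namespace GhatAux
open Complex Filter Topology

lemma slit_of_not_gamma {x : ℝ × ℝ} (hx : x ∉ Gamma0) : toC x ∈ Complex.slitPlane := by
  rw [Complex.mem_slitPlane_iff]
  simp only [toC_re, toC_im]
  by_contra h
  push_neg at h
  exact hx ⟨h.1, h.2⟩

lemma pd2_formula (s : ℝ × ℝ) (hs : s ∉ Gamma0) {x : ℝ × ℝ} (hxG : x ∉ Gamma0) (hne : x ≠ s) :
    pd2 (fun y => Ghat y s) x =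
      (((-(1 / (2 * Real.pi * 2)) : ℝ) : ℂ) *
        (((Q (toC x) - Q (toC s))⁻¹ + (Q (toC x) + (starRingEnd ℂ) (Q (toC s)))⁻¹) *
         (2 * Q (toC x))⁻¹) * I).re := by
  have hσ := slit_of_not_gamma hs
  have hz := slit_of_not_gamma hxG
  have hzs : toC x ≠ toC s := fun h => hne (toC_inj h)
  have h1 : Q (toC x) - Q (toC s) ≠ 0 := sub_ne_zero.mpr (Q_inj hz hσ hzs)
  have h2 := Q_add_conj_ne hz hσ
  obtain ⟨U, H, hUopen, hzU, hdiff, hre, hderiv⟩ := local_rep (Q (toC s)) hz h1 h2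
  have hg : ∀ y : ℝ × ℝ, toC y ∈ U → Ghat y s = (H (toC y)).re := fun y hy => by
    rw [ghat_formula s y, hre (toC y) hy]
  rw [pd2_of_holo hUopen hdiff hg hzU, hderiv]

end GhatAux

open GhatAux Complex

/-- **Statement 9.** For fixed `s ∈ ℝ²∖Γ₀`, `x ↦ Ĝ(x,s)` is harmonic on `ℝ²∖(Γ₀ ∪ {s})` and
satisfies the homogeneous Neumann condition on both crack faces. -/
theorem Ghat_harmonic_and_neumann (s : ℝ × ℝ) (hs : s ∉ Gamma0) :
    (∀ x : ℝ × ℝ, x ∉ Gamma0 → x ≠ s →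
      pd1 (pd1 (fun y => Ghat y s)) x + pd2 (pd2 (fun y => Ghat y s)) x = 0) ∧
    (∀ x₁ : ℝ, x₁ < 0 →
      Tendsto (fun t : ℝ => pd2 (fun y => Ghat y s) (x₁, t))
        (nhdsWithin 0 (Set.Ioi 0)) (nhds 0) ∧
      Tendsto (fun t : ℝ => pd2 (fun y => Ghat y s) (x₁, t))
        (nhdsWithin 0 (Set.Iio 0)) (nhds 0)) := by
  have hσ := slit_of_not_gamma hs
  constructor
  · intro x hxG hxs
    have hz := slit_of_not_gamma hxG
    have hzs : toC x ≠ toC s := fun h => hxs (toC_inj h)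
    have h1 : Q (toC x) - Q (toC s) ≠ 0 := sub_ne_zero.mpr (Q_inj hz hσ hzs)
    have h2 := Q_add_conj_ne hz hσ
    obtain ⟨U, H, hUopen, hzU, hdiff, hre, _⟩ := local_rep (Q (toC s)) hz h1 h2
    have hg : ∀ y : ℝ × ℝ, toC y ∈ U → Ghat y s = (H (toC y)).re := fun y hy => by
      rw [ghat_formula s y, hre (toC y) hy]
    exact harmonic_of_holo hUopen hdiff hg hzU
  · intro x₁ hx₁
    have hw : 0 < (Q (toC s)).re := Qre_pos hσ
    -- eventual inequality with s
    have hnes : ∀ (F : Filter ℝ), F ≤ 𝓝 0 → (∀ᶠ t in F, (x₁, t) ≠ s) := by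
      intro F hF
      by_cases h1 : s.1 = x₁
      · have hs2 : s.2 ≠ 0 := by
          intro h2
          exact hs ⟨by rw [h1]; exact le_of_lt hx₁, h2⟩
        have : ∀ᶠ t in 𝓝 (0:ℝ), t ≠ s.2 := eventually_ne_nhds (Ne.symm hs2)
        filter_upwards [hF this] with t ht h
        exact ht (congrArg Prod.snd h)
      · exact Filter.Eventually.of_forall fun t h => h1 (congrArg Prod.fst h).symm
    have key : ∀ (F : Filter ℝ), F ≤ 𝓝 0 → (∀ᶠ t in F, t ≠ 0) →
        ∀ᶠ (t : ℝ) in F, ((((-(1 / (2 * Real.pi * 2)) : ℝ) : ℂ) *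
          (((Q ((x₁ : ℂ) + (t : ℂ) * I) - Q (toC s))⁻¹ +
            (Q ((x₁ : ℂ) + (t : ℂ) * I) + (starRingEnd ℂ) (Q (toC s)))⁻¹) *
           (2 * Q ((x₁ : ℂ) + (t : ℂ) * I))⁻¹) * I).re)
          = pd2 (fun y => Ghat y s) (x₁, t) := by
      intro F hF ht0
      filter_upwards [hnes F hF, ht0] with t hts htne
      have hxG : (x₁, t) ∉ Gamma0 := fun h => htne h.2
      have := pd2_formula s hs hxG hts
      have htoC : toC (x₁, t) = (x₁ : ℂ) + (t : ℂ) * I := rfl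
      rw [this, htoC]
    constructor
    · refine Tendsto.congr' (key _ nhdsWithin_le_nhds ?_) ?_
      · filter_upwards [self_mem_nhdsWithin] with t ht
        exact ne_of_gt ht
      · exact tendsto_Phi _ hw exp_re_zero_upper (Complex.exp_ne_zero _) (tendsto_Q_upper hx₁)
    · refine Tendsto.congr' (key _ nhdsWithin_le_nhds ?_) ?_
      · filter_upwards [self_mem_nhdsWithin] with t ht
        exact ne_of_lt ht
      · exact tendsto_Phi _ hw exp_re_zero_lower (Complex.exp_ne_zero _) (tendsto_Q_lower hx₁)

end
end

section
/- The corrector 𝒢̃ satisfies the symmetrisation identity 𝒢̃(m,s) + 𝒢̃(s,x̂) = 𝒢̃(s,m) + 𝒢̃(m,x̂) for all m, s ∈ Λ; consequently the function 𝒢̄(m,s) := 𝒢̃(m,s) + 𝒢̃(s,x̂) is symmetric, 𝒢̄(m,s) = 𝒢̄(s,m), and satisfies the same variational equation in each variable as 𝒢̃. -/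
open Filter Topology

noncomputable section

/-- The discrete predictor `𝒢̂(m,s) := Ĝ(m,s)` for `m ≠ s`, `𝒢̂(s,s) := 0`. -/
def GhatD (m s : Z2) : ℝ := if m = s then 0 else Ghat (latpos m) (latpos s)

/-- `(D₁𝒢̂(m,s))_ρ`, the discrete gradient of the predictor in its first variable. -/
def DgPred (s : Z2) (m ρ : Z2) : ℝ := Dg (fun m' => GhatD m' s) m ρ

/-- The variational (Euler–Lagrange) equation for the corrector:
`Σ_m [(D₁𝒢̂(m,s) + DF(m))·Dv(m) − δ_{ms} v(m)] = 0` for all `v ∈ ℋ¹`. -/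
def varEq (s : Z2) (F : Z2 → ℝ) : Prop :=
  ∀ v : Z2 → ℝ, memH1 v →
    HasSum
      (fun m => (∑ ρ ∈ Rall, (DgPred s m ρ + Dg F m ρ) * Dg v m ρ) - (if m = s then v m else 0))
      0

-- ### auxiliary lemmas

section AnalyticCore
open Complex

def Complex.abs : AbsoluteValue ℂ ℝ where
  toFun z := ‖z‖
  map_mul' := norm_mul
  nonneg' := norm_nonneg
  eq_zero' _ := norm_eq_zero
  add_le' := norm_add_le

@[simp] lemma Complex.norm_eq_abs (z : ℂ) : ‖z‖ = Complex.abs z := rfl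

lemma Complex.abs_apply (z : ℂ) : Complex.abs z = Real.sqrt (Complex.normSq z) := rfl

lemma Complex.abs_re_le_abs (z : ℂ) : |z.re| ≤ Complex.abs z := Complex.abs_re_le_norm z

lemma Complex.abs_im_le_abs (z : ℂ) : |z.im| ≤ Complex.abs z := Complex.abs_im_le_norm z

lemma Complex.sq_abs (z : ℂ) : Complex.abs z ^ 2 = Complex.normSq z := Complex.sq_norm z

@[simp] lemma Complex.abs_ofReal (r : ℝ) : Complex.abs (r : ℂ) = |r| := Complex.norm_real r

@[simp] lemma Complex.abs_two : Complex.abs 2 = 2 := by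
  show ‖(2:ℂ)‖ = 2; simp

lemma Complex.abs_cpow_of_ne_zero {z : ℂ} (hz : z ≠ 0) (w : ℂ) :
    Complex.abs (z ^ w) = Complex.abs z ^ w.re / Real.exp (Complex.arg z * w.im) :=
  Complex.norm_cpow_of_ne_zero hz w

def Wf (z : ℂ) : ℂ := z ^ ((1:ℂ)/2)
def gf (a z : ℂ) : ℝ := Real.log (Complex.abs (Wf z - a))

lemma abs_Wf (z : ℂ) : Complex.abs (Wf z) = Real.sqrt (Complex.abs z) := by
  have : ((1:ℂ)/2) = ((1/2 : ℝ) : ℂ) := by norm_num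
  rw [Wf, this, Real.sqrt_eq_rpow]
  rcases eq_or_ne z 0 with rfl | hz
  · simp [Complex.zero_cpow (by norm_num : ((1/2:ℝ):ℂ) ≠ 0)]
  · rw [Complex.abs_cpow_of_ne_zero hz]
    simp

lemma hasDerivAt_Wf {z : ℂ} (hz : z ∈ Complex.slitPlane) :
    HasDerivAt Wf (((1:ℂ)/2) * z ^ (-((1:ℂ)/2))) z := by
  have h := (Complex.hasStrictDerivAt_cpow_const (c := (1:ℂ)/2) hz).hasDerivAt
  rw [show -((1:ℂ)/2) = (1:ℂ)/2 - 1 by norm_num]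
  exact h

def CmulRe (c : ℂ) : ℂ →L[ℝ] ℝ :=
  Complex.reCLM.comp (c • (ContinuousLinearMap.id ℝ ℂ))

@[simp] lemma CmulRe_apply (c v : ℂ) : CmulRe c v = (c * v).re := by
  simp [CmulRe]

lemma norm_CmulRe_le (c : ℂ) : ‖CmulRe c‖ ≤ Complex.abs c := by
  refine ContinuousLinearMap.opNorm_le_bound _ (Complex.abs.nonneg c) fun v => ?_
  rw [CmulRe_apply]
  calc ‖(c * v).re‖ = |(c * v).re| := rfl
    _ ≤ Complex.abs (c * v) := Complex.abs_re_le_abs _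
    _ = Complex.abs c * ‖v‖ := by rw [map_mul]; rfl

lemma hasFDeriv_logabs {w₀ : ℂ} (h : w₀ ≠ 0) :
    HasFDerivAt (fun w => Real.log (Complex.abs w)) (CmulRe w₀⁻¹) w₀ := by
  have hns : Complex.normSq w₀ ≠ 0 := by simpa [Complex.normSq_eq_zero] using h
  have hre : HasFDerivAt (fun w : ℂ => w.re) (Complex.reCLM) w₀ := Complex.reCLM.hasFDerivAt
  have him : HasFDerivAt (fun w : ℂ => w.im) (Complex.imCLM) w₀ := Complex.imCLM.hasFDerivAt
  have h1 : HasFDerivAt (fun w : ℂ => Complex.normSq w)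
      (w₀.re • Complex.reCLM + w₀.re • Complex.reCLM +
        (w₀.im • Complex.imCLM + w₀.im • Complex.imCLM)) w₀ := by
    have := (hre.mul hre).add (him.mul him)
    refine this.congr_fderiv ?_ |>.congr_of_eventuallyEq ?_
    · rfl
    · filter_upwards with w; simp [Complex.normSq_apply]
  have h2 := (Real.hasDerivAt_log hns).comp_hasFDerivAt w₀ h1
  have h3 := h2.const_mul (1/2 : ℝ)
  have hfun : (fun w : ℂ => Real.log (Complex.abs w))
      = (fun w : ℂ => (1/2 : ℝ) * Real.log (Complex.normSq w)) := by
    funext w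
    rw [Complex.abs_apply, Real.log_sqrt (Complex.normSq_nonneg w)]
    ring
  rw [hfun]
  refine h3.congr_fderiv ?_
  ext v
  simp only [CmulRe_apply, ContinuousLinearMap.smul_apply, ContinuousLinearMap.add_apply,
    ContinuousLinearMap.coe_smul', Pi.smul_apply, Complex.reCLM_apply, Complex.imCLM_apply,
    smul_eq_mul]
  rw [Complex.mul_re, Complex.inv_re, Complex.inv_im]
  field_simp
  ring


section deriv
variable {a b z : ℂ}

lemma hasFDeriv_gf (hz : z ∈ Complex.slitPlane) (ha : Wf z ≠ a) :
    HasFDerivAt (gf a) (CmulRe ((Wf z - a)⁻¹ * (((1:ℂ)/2) * z ^ (-((1:ℂ)/2))))) z := by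
  have hinner : HasDerivAt (fun y => Wf y - a) (((1:ℂ)/2) * z ^ (-((1:ℂ)/2))) z :=
    (hasDerivAt_Wf hz).sub_const a
  have hout := hasFDeriv_logabs (sub_ne_zero.mpr ha)
  have hcomp := hout.comp z (hinner.hasFDerivAt.restrictScalars ℝ)
  have : HasFDerivAt (fun y => gf a y) _ z := hcomp
  refine this.congr_fderiv ?_
  ext v
  simp only [CmulRe_apply, ContinuousLinearMap.coe_comp', Function.comp_apply,
    ContinuousLinearMap.coe_restrictScalars', ContinuousLinearMap.smulRight_apply,
    ContinuousLinearMap.toSpanSingleton_apply,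
    ContinuousLinearMap.one_apply, smul_eq_mul]
  congr 1
  ring

lemma hasFDeriv_gf_diff (hz : z ∈ Complex.slitPlane) (ha : Wf z ≠ a) (hb : Wf z ≠ b) :
    HasFDerivAt (fun y => gf a y - gf b y)
      (CmulRe ((a - b) / ((Wf z - a) * (Wf z - b)) * (((1:ℂ)/2) * z ^ (-((1:ℂ)/2))))) z := by
  have h := (hasFDeriv_gf hz ha).sub (hasFDeriv_gf hz hb)
  refine h.congr_fderiv ?_
  ext v
  simp only [CmulRe_apply, ContinuousLinearMap.sub_apply]
  rw [← Complex.sub_re]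
  congr 1
  have ha' : Wf z - a ≠ 0 := sub_ne_zero.mpr ha
  have hb' : Wf z - b ≠ 0 := sub_ne_zero.mpr hb
  field_simp
  ring

lemma abs_zpow_neg_half {z : ℂ} (hz : z ≠ 0) :
    Complex.abs (z ^ (-((1:ℂ)/2))) = (Real.sqrt (Complex.abs z))⁻¹ := by
  have : (-((1:ℂ)/2)) = ((-(1/2) : ℝ) : ℂ) := by norm_num
  rw [this, Complex.abs_cpow_of_ne_zero hz]
  simp [Real.rpow_neg (Complex.abs.nonneg z), Real.sqrt_eq_rpow]

end deriv

set_option maxHeartbeats 1000000 in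
/-- Mean value estimate for the difference of two shifted log-terms along a good segment. -/
lemma key_seg (a b z ρ : ℂ) (hρ : Complex.abs ρ ≤ 1)
    (hK : 4 * (max (Complex.abs a) (Complex.abs b) + 1)^2 ≤ Complex.abs z / 2)
    (hseg : ∀ y ∈ segment ℝ z (z + ρ),
      y ∈ Complex.slitPlane ∧ Complex.abs z / 2 ≤ Complex.abs y) :
    |(gf a (z + ρ) - gf b (z + ρ)) - (gf a z - gf b z)| ≤
      8 * Complex.abs (a - b) / (Complex.abs z * Real.sqrt (Complex.abs z)) := by
  set K := max (Complex.abs a) (Complex.abs b) with hKdef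
  have hK0 : 0 ≤ K := le_trans (Complex.abs.nonneg a) (le_max_left _ _)
  have hzpos : (0:ℝ) < Complex.abs z := by nlinarith
  have hyfacts : ∀ y ∈ segment ℝ z (z + ρ),
      y ≠ 0 ∧ 2*(K+1) ≤ Real.sqrt (Complex.abs y) ∧
      Real.sqrt (Complex.abs y) / 2 ≤ Complex.abs (Wf y - a) ∧
      Real.sqrt (Complex.abs y) / 2 ≤ Complex.abs (Wf y - b) := by
    intro y hy
    obtain ⟨hy1, hy2⟩ := hseg y hy
    have hyabs : 4*(K+1)^2 ≤ Complex.abs y := le_trans hK hy2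
    have hy0 : y ≠ 0 := by
      intro h; rw [h] at hyabs; simp at hyabs; nlinarith
    have hsq : 2*(K+1) ≤ Real.sqrt (Complex.abs y) := by
      have := Real.sqrt_le_sqrt hyabs
      rwa [show (4:ℝ)*(K+1)^2 = (2*(K+1))^2 by ring, Real.sqrt_sq (by positivity)] at this
    have habsW : Complex.abs (Wf y) = Real.sqrt (Complex.abs y) := abs_Wf y
    have hWa : Real.sqrt (Complex.abs y) / 2 ≤ Complex.abs (Wf y - a) := by
      have h1 : Complex.abs (Wf y) - Complex.abs a ≤ Complex.abs (Wf y - a) := by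
        have := norm_sub_norm_le (Wf y) a
        simpa [Complex.norm_eq_abs] using this
      have ha : Complex.abs a ≤ K := le_max_left _ _
      nlinarith [hsq]
    have hWb : Real.sqrt (Complex.abs y) / 2 ≤ Complex.abs (Wf y - b) := by
      have h1 : Complex.abs (Wf y) - Complex.abs b ≤ Complex.abs (Wf y - b) := by
        have := norm_sub_norm_le (Wf y) b
        simpa [Complex.norm_eq_abs] using this
      have hb : Complex.abs b ≤ K := le_max_right _ _
      nlinarith [hsq]
    exact ⟨hy0, hsq, hWa, hWb⟩
  set C : ℝ := 8 * Complex.abs (a - b) / (Complex.abs z * Real.sqrt (Complex.abs z)) with hC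
  set f' : ℂ → ℂ →L[ℝ] ℝ := fun y =>
    CmulRe ((a - b) / ((Wf y - a) * (Wf y - b)) * (((1:ℂ)/2) * y ^ (-((1:ℂ)/2)))) with hf'
  have hder : ∀ y ∈ segment ℝ z (z + ρ),
      HasFDerivWithinAt (fun y => gf a y - gf b y) (f' y) (segment ℝ z (z + ρ)) y := by
    intro y hy
    obtain ⟨hy0, hsq, hWa, hWb⟩ := hyfacts y hy
    have hslit := (hseg y hy).1
    have hWa' : Wf y ≠ a := by
      intro h; rw [h] at hWa; simp at hWa; nlinarith [hsq]
    have hWb' : Wf y ≠ b := by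
      intro h; rw [h] at hWb; simp at hWb; nlinarith [hsq]
    exact (hasFDeriv_gf_diff hslit hWa' hWb').hasFDerivWithinAt
  have hbound : ∀ y ∈ segment ℝ z (z + ρ), ‖f' y‖ ≤ C := by
    intro y hy
    obtain ⟨hy0, hsq, hWa, hWb⟩ := hyfacts y hy
    obtain ⟨_, hy2⟩ := hseg y hy
    have hsy : (0:ℝ) < Real.sqrt (Complex.abs y) := by nlinarith
    have hyabs : (0:ℝ) < Complex.abs y := Real.sqrt_pos.mp hsy
    have hWa0 : (0:ℝ) < Complex.abs (Wf y - a) := by nlinarith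
    have hWb0 : (0:ℝ) < Complex.abs (Wf y - b) := by nlinarith
    have hsz0 : (0:ℝ) < Real.sqrt (Complex.abs z) := Real.sqrt_pos.mpr hzpos
    refine le_trans (norm_CmulRe_le _) ?_
    rw [map_mul, map_mul, map_div₀, map_mul, abs_zpow_neg_half hy0]
    have h12 : Complex.abs ((1:ℂ)/2) = 1/2 := by simp
    rw [h12]
    set A := Complex.abs (a - b) with hA
    have hA0 : 0 ≤ A := Complex.abs.nonneg _
    set s := Real.sqrt (Complex.abs y) with hs
    have hss : s^2 = Complex.abs y := Real.sq_sqrt (Complex.abs.nonneg y)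
    -- step 1 : the whole thing is ≤ 2*A/(|y| * s)
    have hstep1 : A / (Complex.abs (Wf y - a) * Complex.abs (Wf y - b)) * (1/2 * s⁻¹)
        ≤ 2*A/(Complex.abs y * s) := by
      have hd : s/2 * (s/2) ≤ Complex.abs (Wf y - a) * Complex.abs (Wf y - b) :=
        mul_le_mul hWa hWb (by positivity) (by positivity)
      have h1 : A / (Complex.abs (Wf y - a) * Complex.abs (Wf y - b)) ≤ A / (s/2 * (s/2)) := by
        apply div_le_div_of_nonneg_left hA0 (by positivity) hd
      have h2 : A / (s/2 * (s/2)) * (1/2 * s⁻¹) = 2*A/(Complex.abs y * s) := by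
        rw [← hss]; field_simp
      calc A / (Complex.abs (Wf y - a) * Complex.abs (Wf y - b)) * (1/2 * s⁻¹)
          ≤ A / (s/2 * (s/2)) * (1/2 * s⁻¹) := by
            apply mul_le_mul_of_nonneg_right h1 (by positivity)
        _ = 2*A/(Complex.abs y * s) := h2
    -- step 2 : 2*A/(|y| * s) ≤ C
    have hsz : Real.sqrt (Complex.abs z) / 2 ≤ s := by
      have h1 : Real.sqrt (Complex.abs z / 2) ≤ s := Real.sqrt_le_sqrt hy2
      have h2 : Real.sqrt (Complex.abs z) / 2 ≤ Real.sqrt (Complex.abs z / 2) := by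
        rw [show Real.sqrt (Complex.abs z) / 2 = Real.sqrt (Complex.abs z) / 2 from rfl]
        have h3 : (Real.sqrt (Complex.abs z) / 2)^2 ≤ Complex.abs z / 2 := by
          rw [div_pow, Real.sq_sqrt hzpos.le]; nlinarith
        have h4 := Real.sqrt_le_sqrt h3
        rwa [Real.sqrt_sq (by positivity)] at h4
      linarith
    have hstep2 : 2*A/(Complex.abs y * s) ≤ C := by
      rw [hC]
      have hden : Complex.abs z * Real.sqrt (Complex.abs z) / 4 ≤ Complex.abs y * s := by
        have := mul_le_mul hy2 hsz (by positivity) (by positivity)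
        nlinarith [this]
      have h3 : 2*A/(Complex.abs y * s) ≤ 2*A/(Complex.abs z * Real.sqrt (Complex.abs z) / 4) := by
        apply div_le_div_of_nonneg_left (by positivity) (by positivity) hden
      have h4 : 2*A/(Complex.abs z * Real.sqrt (Complex.abs z) / 4)
          = 8 * A / (Complex.abs z * Real.sqrt (Complex.abs z)) := by
        field_simp
        ring
      linarith
    linarith
  have hMVT := (convex_segment z (z+ρ)).norm_image_sub_le_of_norm_hasFDerivWithin_le
    hder hbound (left_mem_segment ℝ z (z+ρ)) (right_mem_segment ℝ z (z+ρ))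
  rw [add_sub_cancel_left] at hMVT
  have hC0 : 0 ≤ C := by positivity
  have hρn : ‖ρ‖ ≤ 1 := hρ
  calc |(gf a (z + ρ) - gf b (z + ρ)) - (gf a z - gf b z)|
      = ‖(fun y => gf a y - gf b y) (z+ρ) - (fun y => gf a y - gf b y) z‖ := by
        norm_num
    _ ≤ C * ‖ρ‖ := hMVT
    _ ≤ C := by nlinarith

def toC (p : ℝ × ℝ) : ℂ := ⟨p.1, p.2⟩

lemma nrm_eq_abs (p : ℝ × ℝ) : nrm p = Complex.abs (toC p) := by
  rw [nrm, toC, Complex.abs_apply, Complex.normSq_mk]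
  ring_nf

lemma toC_sub (p q : ℝ × ℝ) : toC (p - q) = toC p - toC q := by
  apply Complex.ext <;> simp [toC]

lemma omega_eq_Wf (x : ℝ × ℝ) : toC (omegaMap x) = Wf (toC x) := by
  have harg : ((x.1 : ℂ) + (x.2 : ℂ) * Complex.I) = toC x := by
    apply Complex.ext <;> simp [toC]
  have habs : nrm x = Complex.abs (toC x) := nrm_eq_abs x
  have hhalf : ((1:ℂ)/2) = (((1:ℝ)/2 : ℝ) : ℂ) := by norm_num
  apply Complex.ext
  · rw [toC]
    show (omegaMap x).1 = (Wf (toC x)).re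
    rw [Wf, hhalf, Complex.cpow_ofReal_re, omegaMap, harg]
    simp only
    rw [habs, Real.sqrt_eq_rpow, ← Complex.norm_eq_abs]
    ring_nf
  · rw [toC]
    show (omegaMap x).2 = (Wf (toC x)).im
    rw [Wf, hhalf, Complex.cpow_ofReal_im, omegaMap, harg]
    simp only
    rw [habs, Real.sqrt_eq_rpow, ← Complex.norm_eq_abs]
    ring_nf

def zc (m : Z2) : ℂ := toC (latpos m)
def cC (ρ : Z2) : ℂ := ⟨(ρ.1 : ℝ), (ρ.2 : ℝ)⟩

lemma zc_re (m : Z2) : (zc m).re = (m.1 : ℝ) - 1/2 := rfl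
lemma zc_im (m : Z2) : (zc m).im = (m.2 : ℝ) - 1/2 := rfl

lemma zc_add (m ρ : Z2) : zc (m + ρ) = zc m + cC ρ := by
  apply Complex.ext <;> simp [zc, toC, latpos, cC] <;> push_cast <;> ring

lemma half_le (k : ℤ) : (1:ℝ)/2 ≤ |(k:ℝ) - 1/2| := by
  rcases le_or_gt 1 k with h | h
  · have : (1:ℝ) ≤ (k:ℝ) := by exact_mod_cast h
    rw [_root_.abs_of_nonneg (by linarith)]; linarith
  · have hk : k ≤ 0 := by omega
    have : (k:ℝ) ≤ 0 := by exact_mod_cast hk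
    rw [_root_.abs_of_nonpos (by linarith)]; linarith

lemma abs_cC (ρ : Z2) (hρ : ρ ∈ Rall) : Complex.abs (cC ρ) = 1 := by
  simp only [Rall, Finset.mem_insert, Finset.mem_singleton] at hρ
  rcases hρ with rfl | rfl | rfl | rfl <;>
    simp [cC, Complex.abs_apply, Complex.normSq_mk]

lemma seg_cond (m ρ : Z2) (hρR : ρ ∈ Rall) (hρ : ρ ∈ Rm m)
    (hbig : 2 ≤ Complex.abs (zc m)) :
    ∀ y ∈ segment ℝ (zc m) (zc m + cC ρ),
      y ∈ Complex.slitPlane ∧ Complex.abs (zc m) / 2 ≤ Complex.abs y := by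
  intro y hy
  rw [segment_eq_image'] at hy
  obtain ⟨u, hu, rfl⟩ := hy
  simp only [add_sub_cancel_left] at *
  obtain ⟨hu0, hu1⟩ := hu
  constructor
  · -- slitPlane
    rw [Complex.mem_slitPlane_iff]
    simp only [Rall, Finset.mem_insert, Finset.mem_singleton] at hρR
    rcases hρR with rfl | rfl | rfl | rfl
    · -- (1,0): horizontal
      right
      have him : (zc m + u • cC ((1:ℤ),(0:ℤ))).im = (m.2:ℝ) - 1/2 := by
        simp [zc_im, cC, Complex.add_im, Complex.smul_im]
      rw [him]
      have hh := half_le m.2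
      intro h; rw [h] at hh; norm_num at hh
    · -- (0,1): up
      have him : (zc m + u • cC ((0:ℤ),(1:ℤ))).im = (m.2:ℝ) - 1/2 + u := by
        simp [zc_im, cC, Complex.add_im, Complex.smul_im]
      have hre : (zc m + u • cC ((0:ℤ),(1:ℤ))).re = (m.1:ℝ) - 1/2 := by
        simp [zc_re, cC, Complex.add_re, Complex.smul_re]
      rcases le_or_gt 1 m.2 with h2 | h2
      · right; rw [him]
        have : (1:ℝ) ≤ (m.2:ℝ) := by exact_mod_cast h2
        intro h; nlinarith
      · rcases le_or_gt m.2 (-1) with h3 | h3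
        · right; rw [him]
          have : (m.2:ℝ) ≤ -1 := by exact_mod_cast h3
          intro h; nlinarith
        · have hm2 : m.2 = 0 := by omega
          rcases le_or_gt m.1 0 with h1 | h1
          · exfalso
            rw [Rm, if_neg (by simp [hm2]), if_pos ⟨h1, hm2⟩] at hρ
            exact (Finset.mem_erase.mp hρ).1 rfl
          · left; rw [hre]
            have : (1:ℝ) ≤ (m.1:ℝ) := by exact_mod_cast h1
            linarith
    · -- (-1,0): horizontal
      right
      have him : (zc m + u • cC ((-1:ℤ),(0:ℤ))).im = (m.2:ℝ) - 1/2 := by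
        simp [zc_im, cC, Complex.add_im, Complex.smul_im]
      rw [him]
      have hh := half_le m.2
      intro h; rw [h] at hh; norm_num at hh
    · -- (0,-1): down
      have him : (zc m + u • cC ((0:ℤ),(-1:ℤ))).im = (m.2:ℝ) - 1/2 - u := by
        simp [zc_im, cC, Complex.add_im, Complex.smul_im]; ring
      have hre : (zc m + u • cC ((0:ℤ),(-1:ℤ))).re = (m.1:ℝ) - 1/2 := by
        simp [zc_re, cC, Complex.add_re, Complex.smul_re]
      rcases le_or_gt m.2 0 with h2 | h2
      · right; rw [him]
        have : (m.2:ℝ) ≤ 0 := by exact_mod_cast h2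
        intro h; nlinarith
      · rcases le_or_gt 2 m.2 with h3 | h3
        · right; rw [him]
          have : (2:ℝ) ≤ (m.2:ℝ) := by exact_mod_cast h3
          intro h; nlinarith
        · have hm2 : m.2 = 1 := by omega
          rcases le_or_gt m.1 0 with h1 | h1
          · exfalso
            rw [Rm, if_pos ⟨h1, hm2⟩] at hρ
            exact (Finset.mem_erase.mp hρ).1 rfl
          · left; rw [hre]
            have : (1:ℝ) ≤ (m.1:ℝ) := by exact_mod_cast h1
            linarith
  · -- abs lower bound
    have h1 : Complex.abs (zc m) ≤ Complex.abs (zc m + u • cC ρ) + Complex.abs (u • cC ρ) := by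
      have := Complex.abs.add_le (zc m + u • cC ρ) (-(u • cC ρ))
      simpa using this
    have h2 : Complex.abs (u • cC ρ) ≤ 1 := by
      rw [show (u • cC ρ) = ((u:ℂ) * cC ρ) by rw [Complex.real_smul], map_mul, abs_cC ρ hρR]
      simp [Complex.abs_ofReal, _root_.abs_of_nonneg hu0]
      linarith
    linarith

def qZ (n : ℤ) : ℝ := 1 / ((1 + |(n:ℝ)|) * Real.sqrt (1 + |(n:ℝ)|))

lemma qZ_nonneg (n : ℤ) : 0 ≤ qZ n := by
  unfold qZ; positivity

lemma summable_qZ : Summable qZ := by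
  have base : Summable (fun n : ℕ => 1 / ((n:ℝ)) ^ ((3:ℝ)/2)) :=
    Real.summable_one_div_nat_rpow.mpr (by norm_num)
  have shift : Summable (fun n : ℕ => 1 / ((n:ℝ) + 1) ^ ((3:ℝ)/2)) := by
    have := (summable_nat_add_iff 1).mpr base
    refine this.congr fun n => ?_
    push_cast
    ring_nf
  have hnat : Summable (fun n : ℕ => 1 / ((1 + (n:ℝ)) * Real.sqrt (1 + (n:ℝ)))) := by
    refine shift.congr fun n => ?_
    have hx : (0:ℝ) < (n:ℝ) + 1 := by positivity
    have : ((n:ℝ) + 1) ^ ((3:ℝ)/2) = ((n:ℝ)+1) * Real.sqrt ((n:ℝ)+1) := by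
      rw [show ((3:ℝ)/2) = 1 + 1/2 by norm_num, Real.rpow_add hx, Real.rpow_one,
        Real.sqrt_eq_rpow]
    rw [this]
    ring_nf
  apply Summable.of_nat_of_neg <;>
    · refine hnat.congr fun n => ?_
      unfold qZ
      push_cast
      simp [_root_.abs_of_nonneg (Nat.cast_nonneg (α := ℝ) n)]

lemma GhatD_as_gf (t : Z2) (m' : Z2) (hmt : m' ≠ t) (hmx : m' ≠ xhat) :
    GhatD m' t - GhatD m' xhat =
      -(1 / (2 * Real.pi * 2)) *
        ((gf (toC (omegaMap (latpos t))) (zc m') - gf (toC (omegaMap (latpos xhat))) (zc m')) +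
         (gf (toC (omegaStar (latpos t))) (zc m') - gf (toC (omegaStar (latpos xhat))) (zc m'))) := by
  rw [GhatD, GhatD, if_neg hmt, if_neg hmx, Ghat, Ghat]
  have key : ∀ p : ℝ × ℝ, Real.log (nrm (omegaMap (latpos m') - p)) = gf (toC p) (zc m') := by
    intro p
    rw [gf, nrm_eq_abs, toC_sub, omega_eq_Wf]
    rfl
  rw [key, key, key, key]
  ring

lemma quarter_le (k : ℤ) : (1 + |(k:ℝ)|)/4 ≤ |(k:ℝ) - 1/2| := by
  rcases le_or_gt 1 k with h | h
  · have h1 : (1:ℝ) ≤ (k:ℝ) := by exact_mod_cast h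
    rw [_root_.abs_of_nonneg (by linarith), _root_.abs_of_nonneg (by linarith)]
    linarith
  · have hk : k ≤ 0 := by omega
    have h1 : (k:ℝ) ≤ 0 := by exact_mod_cast hk
    rw [_root_.abs_of_nonpos h1, _root_.abs_of_nonpos (by linarith)]
    linarith

lemma gradSq_nonneg' (u : Z2 → ℝ) (m : Z2) : 0 ≤ gradSq u m :=
  Finset.sum_nonneg fun _ _ => sq_nonneg _

set_option maxHeartbeats 1000000 in
lemma factA (t : Z2) : Summable (gradSq (fun m => GhatD m t - GhatD m xhat)) := by
  set h : Z2 → ℝ := fun m => GhatD m t - GhatD m xhat with hh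
  set a1 := toC (omegaMap (latpos t)) with ha1
  set b1 := toC (omegaMap (latpos xhat)) with hb1
  set a2 := toC (omegaStar (latpos t)) with ha2
  set b2 := toC (omegaStar (latpos xhat)) with hb2
  set CC : ℝ := 8 * Complex.abs (a1 - b1) + 8 * Complex.abs (a2 - b2) with hCC
  have hCC0 : 0 ≤ CC := by positivity
  set K1 : ℝ := 4 * (max (Complex.abs a1) (Complex.abs b1) + 1)^2 with hK1
  set K2 : ℝ := 4 * (max (Complex.abs a2) (Complex.abs b2) + 1)^2 with hK2
  have hK10 : 0 ≤ K1 := by positivity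
  have hK20 : 0 ≤ K2 := by positivity
  set RR : ℝ := 2*K1 + 2*K2 + Complex.abs (zc t) + Complex.abs (zc xhat) + 8 with hRR
  have hRR8 : 8 ≤ RR := by
    have h1 : 0 ≤ Complex.abs (zc t) := Complex.abs.nonneg _
    have h2 : 0 ≤ Complex.abs (zc xhat) := Complex.abs.nonneg _
    linarith
  set N : ℕ := ⌈RR⌉₊ + 2 with hN
  set S : Finset Z2 := Finset.Icc (-(N:ℤ)) (N:ℤ) ×ˢ Finset.Icc (-(N:ℤ)) (N:ℤ) with hS
  -- main pointwise bound off S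
  have hfar : ∀ m : Z2, m ∉ S → gradSq h m ≤ (128*CC^2) * (qZ m.1 * qZ m.2) := by
    intro m hm
    set r := Complex.abs (zc m) with hr
    have hr0 : 0 ≤ r := Complex.abs.nonneg _
    -- r is large
    have hrbig : RR ≤ r := by
      have hcoord : (N:ℝ) + 1/2 ≤ r := by
        rw [hS, Finset.mem_product] at hm
        push_neg at hm
        have habs : ∀ k : ℤ, (N:ℤ) < |k| → ((N:ℝ) + 1/2 ≤ |(k:ℝ) - 1/2|) := by
          intro k hk
          have h1 : ((N:ℝ)) + 1 ≤ |(k:ℝ)| := by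
            have : (N:ℤ) + 1 ≤ |k| := hk
            calc ((N:ℝ)) + 1 = (((N:ℤ) + 1 : ℤ) : ℝ) := by push_cast; ring
              _ ≤ ((|k| : ℤ) : ℝ) := by exact_mod_cast this
              _ = |(k:ℝ)| := by push_cast; ring
          have h2 : |(k:ℝ)| ≤ |(k:ℝ) - 1/2| + 1/2 := by
            have := abs_sub_abs_le_abs_sub (k:ℝ) (1/2 : ℝ)
            rw [show |(1:ℝ)/2| = 1/2 by norm_num] at this
            linarith [this]
          linarith
        rcases Decidable.em (m.1 ∈ Finset.Icc (-(N:ℤ)) (N:ℤ)) with h1 | h1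
        · have h2 := hm h1
          rw [Finset.mem_Icc] at h2
          have h2' : m.2 < -(N:ℤ) ∨ (N:ℤ) < m.2 := by omega
          have : (N:ℤ) < |m.2| := by
            rcases h2' with hcase | hcase
            · exact lt_abs.mpr (Or.inr (by omega))
            · exact lt_abs.mpr (Or.inl hcase)
          have hb := habs m.2 this
          calc (N:ℝ) + 1/2 ≤ |(m.2:ℝ) - 1/2| := hb
            _ = |(zc m).im| := by rw [zc_im]
            _ ≤ r := Complex.abs_im_le_abs _
        · rw [Finset.mem_Icc] at h1
          have h1' : m.1 < -(N:ℤ) ∨ (N:ℤ) < m.1 := by omega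
          have : (N:ℤ) < |m.1| := by
            rcases h1' with hcase | hcase
            · exact lt_abs.mpr (Or.inr (by omega))
            · exact lt_abs.mpr (Or.inl hcase)
          have hb := habs m.1 this
          calc (N:ℝ) + 1/2 ≤ |(m.1:ℝ) - 1/2| := hb
            _ = |(zc m).re| := by rw [zc_re]
            _ ≤ r := Complex.abs_re_le_abs _
      have hceil : RR ≤ (N:ℝ) := by
        rw [hN]
        push_cast
        have := Nat.le_ceil RR
        linarith
      linarith
    have hr8 : 8 ≤ r := le_trans hRR8 hrbig
    -- directional bound
    have hdir : ∀ ρ ∈ Rall, |Dg h m ρ| ≤ CC / (r * Real.sqrt r) := by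
      intro ρ hρR
      have hrs0 : 0 < r * Real.sqrt r := by
        have : 0 < Real.sqrt r := Real.sqrt_pos.mpr (by linarith)
        nlinarith
      rw [Dg]
      split
      case isFalse => rw [abs_zero]; positivity
      case isTrue hmem =>
        -- m and m+ρ are away from t and xhat
        have hcstep : Complex.abs (cC ρ) = 1 := abs_cC ρ hρR
        have habsmp : r - 1 ≤ Complex.abs (zc (m+ρ)) := by
          rw [zc_add]
          have := Complex.abs.add_le (zc m + cC ρ) (-(cC ρ))
          simp only [add_neg_cancel_right, map_neg_eq_map] at this
          rw [hcstep] at this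
          linarith
        have hmt : m ≠ t := by
          intro he
          have h' : r = Complex.abs (zc t) := by rw [hr, he]
          have : Complex.abs (zc t) ≤ RR - 8 := by
            rw [hRR]; linarith [Complex.abs.nonneg (zc xhat), hK10, hK20]
          linarith
        have hmx : m ≠ xhat := by
          intro he
          have h' : r = Complex.abs (zc xhat) := by rw [hr, he]
          have : Complex.abs (zc xhat) ≤ RR - 8 := by
            rw [hRR]; linarith [Complex.abs.nonneg (zc t), hK10, hK20]
          linarith
        have hmpt : m + ρ ≠ t := by
          intro he; rw [he] at habsmp
          have : Complex.abs (zc t) ≤ RR - 8 := by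
            rw [hRR]; linarith [Complex.abs.nonneg (zc xhat), hK10, hK20]
          linarith
        have hmpx : m + ρ ≠ xhat := by
          intro he; rw [he] at habsmp
          have : Complex.abs (zc xhat) ≤ RR - 8 := by
            rw [hRR]; linarith [Complex.abs.nonneg (zc t), hK10, hK20]
          linarith
        -- express as gf differences
        have hrepm := GhatD_as_gf t m hmt hmx
        have hrepmp := GhatD_as_gf t (m+ρ) hmpt hmpx
        have hzadd : zc (m + ρ) = zc m + cC ρ := zc_add m ρ
        rw [hzadd] at hrepmp
        have hΔ1 := key_seg a1 b1 (zc m) (cC ρ) (le_of_eq hcstep)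
          (by rw [← hK1, ← hr]; linarith [hK10, hK20, Complex.abs.nonneg (zc t), Complex.abs.nonneg (zc xhat)]) (seg_cond m ρ hρR hmem (by linarith))
        have hΔ2 := key_seg a2 b2 (zc m) (cC ρ) (le_of_eq hcstep)
          (by rw [← hK2, ← hr]; linarith [hK10, hK20, Complex.abs.nonneg (zc t), Complex.abs.nonneg (zc xhat)]) (seg_cond m ρ hρR hmem (by linarith))
        have hpi : (1:ℝ)/(2*Real.pi*2) ≤ 1 := by
          have := Real.pi_gt_three
          rw [div_le_one (by linarith)]
          linarith
        have hpi0 : (0:ℝ) < 1/(2*Real.pi*2) := by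
          have := Real.pi_gt_three
          positivity
        show |h (m+ρ) - h m| ≤ CC / (r * Real.sqrt r)
        rw [hh]
        simp only
        rw [hrepm, hrepmp]
        set D1 := (gf a1 (zc m + cC ρ) - gf b1 (zc m + cC ρ)) - (gf a1 (zc m) - gf b1 (zc m)) with hD1
        set D2 := (gf a2 (zc m + cC ρ) - gf b2 (zc m + cC ρ)) - (gf a2 (zc m) - gf b2 (zc m)) with hD2
        have hre : -(1 / (2 * Real.pi * 2)) *
            ((gf a1 (zc m + cC ρ) - gf b1 (zc m + cC ρ)) +
             (gf a2 (zc m + cC ρ) - gf b2 (zc m + cC ρ))) -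
            (-(1 / (2 * Real.pi * 2)) *
            ((gf a1 (zc m) - gf b1 (zc m)) + (gf a2 (zc m) - gf b2 (zc m))))
            = -(1 / (2 * Real.pi * 2)) * (D1 + D2) := by
          rw [hD1, hD2]; ring
        rw [hre, abs_mul, abs_neg, _root_.abs_of_nonneg hpi0.le]
        have hsum : |D1 + D2| ≤
            8 * Complex.abs (a1 - b1) / (r * Real.sqrt r) +
            8 * Complex.abs (a2 - b2) / (r * Real.sqrt r) := by
          calc |D1 + D2| ≤ |D1| + |D2| := abs_add_le _ _
            _ ≤ _ := add_le_add hΔ1 hΔ2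
        have hCCeq : 8 * Complex.abs (a1 - b1) / (r * Real.sqrt r) +
            8 * Complex.abs (a2 - b2) / (r * Real.sqrt r) = CC / (r * Real.sqrt r) := by
          rw [hCC]; field_simp
        rw [hCCeq] at hsum
        have habs0 : 0 ≤ |D1 + D2| := abs_nonneg _
        calc 1/(2*Real.pi*2) * |D1 + D2| ≤ 1 * |D1 + D2| := by
              apply mul_le_mul_of_nonneg_right hpi habs0
          _ = |D1 + D2| := by ring
          _ ≤ CC / (r * Real.sqrt r) := hsum
    -- gradSq bound
    have hsr0 : 0 < Real.sqrt r := Real.sqrt_pos.mpr (by linarith)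
    have hgs : gradSq h m ≤ 4 * (CC / (r * Real.sqrt r))^2 := by
      unfold gradSq
      have hcard : (Rall.card) = 4 := by decide
      calc ∑ ρ ∈ Rall, (Dg h m ρ)^2 ≤ ∑ _ρ ∈ Rall, (CC/(r*Real.sqrt r))^2 := by
            refine Finset.sum_le_sum fun ρ hρ => ?_
            have h1 := abs_le.mp (hdir ρ hρ)
            nlinarith [h1.1, h1.2]
        _ = 4 * (CC/(r*Real.sqrt r))^2 := by
            rw [Finset.sum_const, hcard]
            simp [nsmul_eq_mul]
    -- coordinate comparison
    set A : ℝ := 1 + |(m.1:ℝ)| with hA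
    set B : ℝ := 1 + |(m.2:ℝ)| with hB
    have hA1 : 1 ≤ A := by rw [hA]; linarith [abs_nonneg ((m.1:ℝ))]
    have hB1 : 1 ≤ B := by rw [hB]; linarith [abs_nonneg ((m.2:ℝ))]
    have hA0 : (0:ℝ) < A := by linarith
    have hB0 : (0:ℝ) < B := by linarith
    have hrpos : (0:ℝ) < r := by linarith
    have hre2 : r^2 = ((m.1:ℝ)-1/2)^2 + ((m.2:ℝ)-1/2)^2 := by
      rw [hr, Complex.sq_abs, Complex.normSq_apply, zc_re, zc_im]; ring
    have h1sq : (A/4)^2 ≤ ((m.1:ℝ)-1/2)^2 := by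
      have hq := quarter_le m.1
      rw [← hA] at hq
      have := _root_.sq_abs ((m.1:ℝ)-1/2)
      nlinarith [abs_nonneg ((m.1:ℝ)-1/2)]
    have h2sq : (B/4)^2 ≤ ((m.2:ℝ)-1/2)^2 := by
      have hq := quarter_le m.2
      rw [← hB] at hq
      have := _root_.sq_abs ((m.2:ℝ)-1/2)
      nlinarith [abs_nonneg ((m.2:ℝ)-1/2)]
    have hAB : A*B/8 ≤ r^2 := by nlinarith [sq_nonneg (A-B)]
    have hABr : Real.sqrt (A*B/8) ≤ r := by
      have := Real.sqrt_le_sqrt hAB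
      rwa [Real.sqrt_sq hr0] at this
    have hsAB : Real.sqrt (A*B) ≤ 3*r := by
      have h8 : Real.sqrt (A*B) = Real.sqrt 8 * Real.sqrt (A*B/8) := by
        rw [← Real.sqrt_mul (by norm_num : (0:ℝ) ≤ 8)]
        congr 1; ring
      have h83 : Real.sqrt 8 ≤ 3 := by
        have h93 : Real.sqrt 9 = 3 := by
          rw [show (9:ℝ) = 3^2 by norm_num]
          exact Real.sqrt_sq (by norm_num)
        rw [← h93]
        exact Real.sqrt_le_sqrt (by norm_num)
      rw [h8]
      nlinarith [Real.sqrt_nonneg (A*B/8), Real.sqrt_nonneg (8:ℝ)]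
    have htarget : A*Real.sqrt A*(B*Real.sqrt B) ≤ 32*(r^2*r) := by
      have hs : Real.sqrt A * Real.sqrt B = Real.sqrt (A*B) := (Real.sqrt_mul hA0.le B).symm
      have hABle : A*B ≤ 8*r^2 := by nlinarith [hAB]
      have hprod : (A*B)*Real.sqrt (A*B) ≤ (8*r^2)*(3*r) :=
        mul_le_mul hABle hsAB (Real.sqrt_nonneg _) (by positivity)
      have heq : A*Real.sqrt A*(B*Real.sqrt B) = (A*B)*(Real.sqrt A*Real.sqrt B) := by ring
      rw [heq, hs]
      nlinarith [hprod, hrpos, sq_nonneg r]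
    -- conclude
    have hds : (r * Real.sqrt r)^2 = r^2 * r := by
      rw [mul_pow, Real.sq_sqrt hr0]
    have hgs2 : gradSq h m ≤ 4 * CC^2 / (r^2 * r) := by
      have : 4 * (CC / (r * Real.sqrt r))^2 = 4 * CC^2 / (r^2*r) := by
        rw [div_pow, hds]; ring
      linarith [hgs]
    have hq12 : qZ m.1 * qZ m.2 = 1/(A*Real.sqrt A*(B*Real.sqrt B)) := by
      unfold qZ
      rw [← hA, ← hB, div_mul_div_comm]
      congr 1
      ring
    rw [hq12]
    have hD0 : (0:ℝ) < A*Real.sqrt A*(B*Real.sqrt B) := by positivity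
    have hr30 : (0:ℝ) < r^2*r := by positivity
    rw [show (128*CC^2) * (1/(A*Real.sqrt A*(B*Real.sqrt B)))
        = 128*CC^2/(A*Real.sqrt A*(B*Real.sqrt B)) by ring]
    have hfinal : 4 * CC^2 / (r^2 * r) ≤ 128*CC^2/(A*Real.sqrt A*(B*Real.sqrt B)) := by
      rw [div_le_div_iff₀ hr30 hD0]
      nlinarith [htarget, sq_nonneg CC]
    linarith
  -- final assembly
  have hqq : Summable (fun m : Z2 => qZ m.1 * qZ m.2) :=
    summable_qZ.mul_of_nonneg summable_qZ qZ_nonneg qZ_nonneg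
  have hM : Summable (fun m : Z2 => (128*CC^2) * (qZ m.1 * qZ m.2)) := hqq.mul_left _
  -- comparison off the finite set S
  have h1 : Summable (fun m : Z2 => (if m ∈ S then gradSq h m else (128*CC^2) * (qZ m.1 * qZ m.2))
      - (128*CC^2) * (qZ m.1 * qZ m.2)) :=
    summable_of_ne_finset_zero (s := S) (by intro m hm; simp [hm])
  have h2 : Summable (fun m : Z2 => if m ∈ S then gradSq h m else (128*CC^2) * (qZ m.1 * qZ m.2)) := by
    have := hM.add h1
    refine this.congr fun m => by ring
  refine Summable.of_nonneg_of_le (fun m => gradSq_nonneg' h m) (fun m => ?_) h2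
  by_cases hm : m ∈ S
  · simp [hm]
  · simp only [hm, if_false]
    exact hfar m hm

end AnalyticCore


lemma Dg_add (u v : Z2 → ℝ) (m ρ : Z2) :
    Dg (fun m' => u m' + v m') m ρ = Dg u m ρ + Dg v m ρ := by
  unfold Dg; split <;> ring

lemma Dg_sub (u v : Z2 → ℝ) (m ρ : Z2) :
    Dg (fun m' => u m' - v m') m ρ = Dg u m ρ - Dg v m ρ := by
  unfold Dg; split <;> ring

lemma Dg_add_const (u : Z2 → ℝ) (c : ℝ) (m ρ : Z2) :
    Dg (fun m' => u m' + c) m ρ = Dg u m ρ := by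
  unfold Dg; split <;> ring

lemma gradSq_nonneg (u : Z2 → ℝ) (m : Z2) : 0 ≤ gradSq u m :=
  Finset.sum_nonneg fun _ _ => sq_nonneg _

lemma summable_off_finset {f g : Z2 → ℝ} (S : Finset Z2) (hf0 : ∀ m, 0 ≤ f m)
    (hle : ∀ m ∉ S, f m ≤ g m) (hg : Summable g) : Summable f := by
  have h1 : Summable (fun m => (if m ∈ S then f m else g m) - g m) :=
    summable_of_ne_finset_zero (s := S) (by intro m hm; simp [hm])
  have h2 : Summable (fun m => if m ∈ S then f m else g m) := by
    have := hg.add h1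
    refine this.congr fun m => by ring
  refine Summable.of_nonneg_of_le hf0 (fun m => ?_) h2
  by_cases hm : m ∈ S <;> simp [hm, hle m]

lemma summable_gradSq_sub {u v : Z2 → ℝ} (hu : Summable (gradSq u)) (hv : Summable (gradSq v)) :
    Summable (gradSq (fun m => u m - v m)) := by
  refine Summable.of_nonneg_of_le (gradSq_nonneg _) (fun m => ?_)
    ((hu.mul_left 2).add (hv.mul_left 2))
  unfold gradSq
  rw [Finset.mul_sum, Finset.mul_sum, ← Finset.sum_add_distrib]
  refine Finset.sum_le_sum fun ρ _ => ?_
  rw [Dg_sub]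
  nlinarith [sq_nonneg (Dg u m ρ + Dg v m ρ)]

lemma summable_gradSq_add {u v : Z2 → ℝ} (hu : Summable (gradSq u)) (hv : Summable (gradSq v)) :
    Summable (gradSq (fun m => u m + v m)) := by
  refine Summable.of_nonneg_of_le (gradSq_nonneg _) (fun m => ?_)
    ((hu.mul_left 2).add (hv.mul_left 2))
  unfold gradSq
  rw [Finset.mul_sum, Finset.mul_sum, ← Finset.sum_add_distrib]
  refine Finset.sum_le_sum fun ρ _ => ?_
  rw [Dg_add]
  nlinarith [sq_nonneg (Dg u m ρ - Dg v m ρ)]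

lemma nrm_symm_aux (p q : ℝ × ℝ) : nrm (p - q) = nrm (q - p) := by
  unfold nrm; rw [Prod.fst_sub, Prod.snd_sub, Prod.fst_sub, Prod.snd_sub]; ring_nf

lemma GhatD_symm (m s : Z2) : GhatD m s = GhatD s m := by
  unfold GhatD
  by_cases h : m = s
  · simp [h]
  · rw [if_neg h, if_neg (Ne.symm h)]
    unfold Ghat
    congr 2
    · rw [nrm_symm_aux]
    · unfold nrm omegaStar
      rw [Prod.fst_sub, Prod.snd_sub, Prod.fst_sub, Prod.snd_sub]
      ring_nf


lemma GhatD_diag (a : Z2) : GhatD a a = 0 := by simp [GhatD]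

lemma Dg_w (Gt : Z2 → Z2 → ℝ) (a m ρ : Z2) :
    Dg (fun m' => (GhatD m' a - GhatD m' xhat) + (Gt m' a - Gt m' xhat) - GhatD xhat a) m ρ =
      (DgPred a m ρ + Dg (fun m' => Gt m' a) m ρ)
        - (DgPred xhat m ρ + Dg (fun m' => Gt m' xhat) m ρ) := by
  by_cases h : ρ ∈ Rm m <;> simp [Dg, DgPred, h] <;> ring

lemma main_sym (Gt : Z2 → Z2 → ℝ)
    (hGt : ∀ s : Z2, memH1 (fun m => Gt m s) ∧ varEq s (fun m => Gt m s))
    (s t : Z2) : Gt s t - Gt s xhat = Gt t s - Gt t xhat := by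
  have hGt0 : ∀ a : Z2, Gt xhat a = 0 := fun a => (hGt a).1.2
  set w : Z2 → Z2 → ℝ := fun a m =>
    (GhatD m a - GhatD m xhat) + (Gt m a - Gt m xhat) - GhatD xhat a with hw
  have hw0 : ∀ a, w a xhat = 0 := by
    intro a; simp only [hw, GhatD_diag, hGt0]; ring
  have hwsum : ∀ a, Summable (gradSq (w a)) := by
    intro a
    have h1 : Summable (gradSq (fun m => (GhatD m a - GhatD m xhat) + (Gt m a - Gt m xhat))) :=
      summable_gradSq_add (factA a) (summable_gradSq_sub (hGt a).1.1 (hGt xhat).1.1)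
    refine h1.congr fun m => ?_
    unfold gradSq
    refine Finset.sum_congr rfl fun ρ _ => ?_
    have : w a = fun m => ((GhatD m a - GhatD m xhat) + (Gt m a - Gt m xhat)) + (-GhatD xhat a) := by
      funext m; simp [hw]; ring
    rw [this, Dg_add_const]
  have hwH1 : ∀ a, memH1 (w a) := fun a => ⟨hwsum a, hw0 a⟩
  have hwd : memH1 (fun m => w t m - w s m) :=
    ⟨summable_gradSq_sub (hwsum t) (hwsum s), by show w t xhat - w s xhat = 0; rw [hw0, hw0]; ring⟩
  have E1 := (hGt s).2 (w t) (hwH1 t)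
  have E2 := (hGt t).2 (w s) (hwH1 s)
  have E3 := (hGt xhat).2 (fun m => w t m - w s m) hwd
  have H := (E1.sub E2).sub E3
  rw [sub_zero, sub_zero] at H
  have Hg : HasSum (fun m : Z2 => (if m = t then w s t else 0) - (if m = s then w t s else 0))
      (w s t - w t s) := (hasSum_ite_eq t (w s t)).sub (hasSum_ite_eq s (w t s))
  have heq : ∀ m : Z2,
      ((∑ ρ ∈ Rall, (DgPred s m ρ + Dg (fun m' => Gt m' s) m ρ) * Dg (w t) m ρ) -
          (if m = s then w t m else 0) -
        ((∑ ρ ∈ Rall, (DgPred t m ρ + Dg (fun m' => Gt m' t) m ρ) * Dg (w s) m ρ) -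
          (if m = t then w s m else 0)) -
        ((∑ ρ ∈ Rall, (DgPred xhat m ρ + Dg (fun m' => Gt m' xhat) m ρ) *
            Dg (fun m' => w t m' - w s m') m ρ) -
          (if m = xhat then w t m - w s m else 0)))
      = (if m = t then w s t else 0) - (if m = s then w t s else 0) := by
    intro m
    have hsum0 :
        (∑ ρ ∈ Rall, (DgPred s m ρ + Dg (fun m' => Gt m' s) m ρ) * Dg (w t) m ρ) -
          (∑ ρ ∈ Rall, (DgPred t m ρ + Dg (fun m' => Gt m' t) m ρ) * Dg (w s) m ρ) -
          (∑ ρ ∈ Rall, (DgPred xhat m ρ + Dg (fun m' => Gt m' xhat) m ρ) *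
            Dg (fun m' => w t m' - w s m') m ρ) = 0 := by
      rw [← Finset.sum_sub_distrib, ← Finset.sum_sub_distrib]
      refine Finset.sum_eq_zero fun ρ _ => ?_
      have h1 : Dg (w t) m ρ = (DgPred t m ρ + Dg (fun m' => Gt m' t) m ρ)
          - (DgPred xhat m ρ + Dg (fun m' => Gt m' xhat) m ρ) := Dg_w Gt t m ρ
      have h2 : Dg (w s) m ρ = (DgPred s m ρ + Dg (fun m' => Gt m' s) m ρ)
          - (DgPred xhat m ρ + Dg (fun m' => Gt m' xhat) m ρ) := Dg_w Gt s m ρ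
      have h3 : Dg (fun m' => w t m' - w s m') m ρ = Dg (w t) m ρ - Dg (w s) m ρ :=
        Dg_sub (w t) (w s) m ρ
      rw [h3, h1, h2]; ring
    have hxh : (if m = xhat then w t m - w s m else 0) = 0 := by
      split
      · next h => rw [h, hw0, hw0]; ring
      · rfl
    have hts : (if m = t then w s m else 0) = (if m = t then w s t else 0) := by
      split
      · next h => rw [h]
      · rfl
    have hss : (if m = s then w t m else 0) = (if m = s then w t s else 0) := by
      split
      · next h => rw [h]
      · rfl
    rw [hxh, hts, hss] at *
    linarith [hsum0]
  rw [funext heq] at H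
  have hzero : w s t - w t s = 0 := Hg.unique H
  have h1 : GhatD s t = GhatD t s := GhatD_symm s t
  have h2 : GhatD s xhat = GhatD xhat s := GhatD_symm s xhat
  have h3 : GhatD t xhat = GhatD xhat t := GhatD_symm t xhat
  simp only [hw] at hzero
  linarith

lemma shifted_ok (Gt : Z2 → Z2 → ℝ)
    (hGt : ∀ s : Z2, memH1 (fun m => Gt m s) ∧ varEq s (fun m => Gt m s))
    (a : Z2) (c : ℝ) :
    Summable (gradSq (fun m => Gt m a + c)) ∧ varEq a (fun m => Gt m a + c) := by
  constructor
  · refine ((hGt a).1.1).congr fun m => ?_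
    unfold gradSq
    exact Finset.sum_congr rfl fun ρ _ => by rw [Dg_add_const (fun m' => Gt m' a) c]
  · intro v hv
    have hE := (hGt a).2 v hv
    have hd : ∀ m ρ : Z2, Dg (fun m' => Gt m' a + c) m ρ = Dg (fun m' => Gt m' a) m ρ :=
      fun m ρ => Dg_add_const _ _ m ρ
    simp only [hd]
    exact hE


/-- **Statement 15.** The corrector satisfies `𝒢̃(m,s) + 𝒢̃(s,x̂) = 𝒢̃(s,m) + 𝒢̃(m,x̂)`;
hence `𝒢̄(m,s) := 𝒢̃(m,s) + 𝒢̃(s,x̂)` is symmetric and satisfies the same variational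
equation in each variable. -/
theorem corrector_symmetrisation
    (Gt : Z2 → Z2 → ℝ)
    (hGt : ∀ s : Z2, memH1 (fun m => Gt m s) ∧ varEq s (fun m => Gt m s)) :
    (∀ m s : Z2, Gt m s + Gt s xhat = Gt s m + Gt m xhat) ∧
    (∀ s : Z2, Summable (gradSq (fun m => Gt m s + Gt s xhat)) ∧
      varEq s (fun m => Gt m s + Gt s xhat)) ∧
    (∀ m : Z2, Summable (gradSq (fun s' => Gt m s' + Gt s' xhat)) ∧
      varEq m (fun s' => Gt m s' + Gt s' xhat)) := by
  have part1 : ∀ m s : Z2, Gt m s + Gt s xhat = Gt s m + Gt m xhat := by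
    intro m s; have := main_sym Gt hGt m s; linarith
  refine ⟨part1, fun s => shifted_ok Gt hGt s (Gt s xhat), fun m => ?_⟩
  have hfe : (fun s' => Gt m s' + Gt s' xhat) = (fun s' => Gt s' m + Gt m xhat) := by
    funext s'; linarith [part1 m s']
  rw [hfe]
  exact shifted_ok Gt hGt m (Gt m xhat)

end
end
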